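/- arXiv:2001.03692 — 6 statements merged into one kernel-verified Lean document; each statement's English description precedes it below -/
import Mathlib

section
/- Let R and E be nonempty finite sets, let k ≥ 1 be an integer, and let ε ≥ 0 be a real number. Let f : R × {1,…,k} × E → ℝ satisfy 0 ≤ f(r,i,e) ≤ 1 for all r, i, e. Suppose that for every index i ∈ {1,…,k} and every function g : R → E, the average (1/|R|)·Σ_{r∈R} f(r, i, g(r)) is at most ε. Then there exists r ∈ R such that the number of indices i ∈ {1,…,k} satisfying f(r,i,e) ≤ 2ε for all e ∈ E is at least k/2. -/
open scoped Classical

/-- The combinatorial core of Theorem 1: if for every message index `i` and every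
adversary strategy `g : R → E` the average failure probability over the encoder's
randomness `r` is at most `ε`, then some fixing of `r` is good (failure probability
at most `2ε` against every error pattern) for at least half of the indices. -/
theorem stmt_0 {R E : Type*} [Fintype R] [Fintype E] [Nonempty R] [Nonempty E]
    (k : ℕ) (hk : 1 ≤ k) (ε : ℝ) (hε : 0 ≤ ε)
    (f : R → Fin k → E → ℝ)
    (hf0 : ∀ r i e, 0 ≤ f r i e) (hf1 : ∀ r i e, f r i e ≤ 1)
    (havg : ∀ (i : Fin k) (g : R → E),
      (1 / (Fintype.card R : ℝ)) * ∑ r : R, f r i (g r) ≤ ε) :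
    ∃ r : R, (k : ℝ) / 2 ≤
      ((Finset.univ.filter (fun i : Fin k => ∀ e : E, f r i e ≤ 2 * ε)).card : ℝ) := by
  classical
  set N := Fintype.card R with hNdef
  have hN : 0 < N := Fintype.card_pos
  have hNR : (0 : ℝ) < N := by exact_mod_cast hN
  -- choose adversary strategy witnessing badness
  have hg : ∀ (i : Fin k) (r : R), ∃ e : E, (∃ e', 2*ε < f r i e') → 2*ε < f r i e := by
    intro i r
    by_cases h : ∃ e', 2*ε < f r i e'
    · obtain ⟨e, he⟩ := h; exact ⟨e, fun _ => he⟩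
    · exact ⟨Classical.arbitrary E, fun h' => absurd h' h⟩
  choose g hgspec using hg
  set S : Fin k → Finset R := fun i => Finset.univ.filter (fun r => ∃ e, 2*ε < f r i e)
    with hSdef
  have hsum' : ∀ i : Fin k, ∑ r : R, f r i (g i r) ≤ ε * N := by
    intro i
    have h := havg i (g i)
    rw [div_mul_eq_mul_div, one_mul, div_le_iff₀ hNR] at h
    exact h
  have hScard : ∀ i : Fin k, ((S i).card : ℝ) ≤ N / 2 := by
    intro i
    have h1 : ((S i).card : ℝ) * (2*ε) ≤ ∑ r ∈ S i, f r i (g i r) := by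
      have := Finset.card_nsmul_le_sum (S i) (fun r => f r i (g i r)) (2*ε) ?_
      · simpa [nsmul_eq_mul] using this
      · intro r hr
        have hr' : ∃ e, 2*ε < f r i e := (Finset.mem_filter.mp hr).2
        exact le_of_lt (hgspec i r hr')
    have h2 : ∑ r ∈ S i, f r i (g i r) ≤ ∑ r : R, f r i (g i r) :=
      Finset.sum_le_sum_of_subset_of_nonneg (Finset.subset_univ _)
        (fun r _ _ => hf0 r i (g i r))
    by_cases hε0 : ε = 0
    · subst hε0
      -- S i is empty
      have hSe : S i = ∅ := by
        by_contra hne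
        obtain ⟨r, hr⟩ := Finset.nonempty_of_ne_empty hne
        have hr' : ∃ e, 2*0 < f r i e := (Finset.mem_filter.mp hr).2
        have hfr : 0 < f r i (g i r) := by simpa using hgspec i r hr'
        have hle : f r i (g i r) ≤ ∑ r' : R, f r' i (g i r') :=
          Finset.single_le_sum (fun r' _ => hf0 r' i (g i r')) (Finset.mem_univ r)
        have := hsum' i
        simp only [zero_mul] at this
        linarith
      simp [hSe]
      positivity
    · have hεpos : 0 < ε := lt_of_le_of_ne hε (Ne.symm hε0)
      nlinarith [h1, h2, hsum' i]
  -- double counting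
  have hswap : ∑ r : R, ((Finset.univ.filter
      (fun i : Fin k => ∃ e, 2*ε < f r i e)).card : ℝ)
      = ∑ i : Fin k, ((S i).card : ℝ) := by
    simp only [Finset.card_filter, hSdef]
    push_cast
    rw [Finset.sum_comm]
  have htot : ∑ r : R, ((Finset.univ.filter
      (fun i : Fin k => ∃ e, 2*ε < f r i e)).card : ℝ) ≤ ∑ r : R, (k : ℝ)/2 := by
    rw [hswap, Finset.sum_const, Finset.card_univ]
    calc ∑ i : Fin k, ((S i).card : ℝ) ≤ ∑ i : Fin k, (N : ℝ)/2 :=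
          Finset.sum_le_sum (fun i _ => hScard i)
      _ = k * ((N:ℝ)/2) := by simp
      _ ≤ N • ((k:ℝ)/2) := by rw [nsmul_eq_mul]; ring_nf; rfl
  obtain ⟨r, -, hr⟩ := Finset.exists_le_of_sum_le (Finset.univ_nonempty) htot
  refine ⟨r, ?_⟩
  have hpart := Finset.card_filter_add_card_filter_not
    (s := (Finset.univ : Finset (Fin k)))
    (p := fun i : Fin k => ∃ e, 2*ε < f r i e)
  have hcompl : (Finset.univ.filter (fun i : Fin k => ¬ ∃ e, 2*ε < f r i e))
      = Finset.univ.filter (fun i : Fin k => ∀ e : E, f r i e ≤ 2 * ε) := by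
    apply Finset.filter_congr
    intro i _
    push_neg
    rfl
  rw [hcompl, Finset.card_univ, Fintype.card_fin] at hpart
  have : ((Finset.univ.filter (fun i : Fin k => ∀ e : E, f r i e ≤ 2 * ε)).card : ℝ)
      = k - ((Finset.univ.filter (fun i : Fin k => ∃ e, 2*ε < f r i e)).card : ℝ) := by
    have := hpart
    push_cast [← hpart]
    ring
  rw [this]
  linarith
end

section
/- Let n ≥ 1 be an integer, let S and W be subsets of {1,…,n}, let μ = |W|·|S|/n (a real number), and let δ ∈ (0,1) be a real constant. If π is a uniformly random permutation of {1,…,n} (uniform over all n! permutations), then Pr[|π(S) ∩ W| ≤ (1−δ)·μ] ≤ e^{−δ²μ/2}; equivalently, the number of permutations σ of {1,…,n} with |σ(S) ∩ W| ≤ (1−δ)·μ is at most e^{−δ²μ/2}·n!. -/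
open scoped Classical

lemma step_ineq (m w s : ℕ) (q : ℝ) (hq0 : 0 ≤ q) (hq1 : q < 1)
    (hs : 1 ≤ s) (hsn : s ≤ m + 1) (hw : w ≤ m + 1) :
    (w : ℝ) * (1 - q) * Real.exp (-q * ((w : ℝ) - 1) * ((s : ℝ) - 1) / m)
      + ((m : ℝ) + 1 - w) * Real.exp (-q * w * ((s : ℝ) - 1) / m)
      ≤ ((m : ℝ) + 1) * Real.exp (-q * w * s / ((m : ℝ) + 1)) := by
  rcases Nat.eq_zero_or_pos m with hm | hm
  · subst hm
    interval_cases s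
    interval_cases w
    · simp
    · push_cast
      simp only [div_zero, mul_zero, zero_div, Real.exp_zero, sub_self, mul_one]
      have he2 : (-q / ((0:ℝ)+1) : ℝ) = -q := by ring
      rw [he2]
      nlinarith [Real.add_one_le_exp (-q)]
  · have hmR : (0:ℝ) < m := by exact_mod_cast hm
    have hsR : (1:ℝ) ≤ s := by exact_mod_cast hs
    have hsnR : (s:ℝ) ≤ (m:ℝ) + 1 := by exact_mod_cast hsn
    have hwR : (w:ℝ) ≤ (m:ℝ) + 1 := by exact_mod_cast hw
    set α : ℝ := ((s:ℝ) - 1) / m with hα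
    have hα0 : 0 ≤ α := div_nonneg (by linarith) hmR.le
    have hα1 : α ≤ 1 := by rw [div_le_one hmR]; linarith
    have hqα1 : q * α < 1 := by nlinarith
    -- bound exp(qα) ≤ 1/(1-qα)
    have h1 : Real.exp (q * α) ≤ 1 / (1 - q * α) := by
      rw [le_div_iff₀ (by linarith)]
      have := Real.add_one_le_exp (-(q * α))
      calc Real.exp (q * α) * (1 - q * α) ≤ Real.exp (q * α) * Real.exp (-(q*α)) := by
            apply mul_le_mul_of_nonneg_left _ (Real.exp_pos _).le
            linarith
        _ = 1 := by rw [← Real.exp_add]; simp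
    -- the multiplied form.  Let n = m+1.
    set nR : ℝ := (m:ℝ) + 1 with hnR
    have hn0 : (0:ℝ) < nR := by positivity
    -- key: rewrite exponents
    have eμ : -q * w * ((s:ℝ)-1) / m = -(q * w * α) := by
      rw [hα]; field_simp
    have eμ1 : -q * ((w:ℝ)-1) * ((s:ℝ)-1) / m = -(q * w * α) + q * α := by
      rw [hα]; field_simp; ring
    have eμ3 : -q * w * s / nR = -(q * w * α) + (- (q * w * (nR - s) / (m * nR))) := by
      rw [hα]; field_simp; ring
    rw [eμ, eμ1, eμ3, Real.exp_add, Real.exp_add]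
    rw [show (w:ℝ) * (1-q) * (Real.exp (-(q*w*α)) * Real.exp (q*α)) =
        (Real.exp (-(q*w*α))) * ((w:ℝ)*(1-q)*Real.exp (q*α)) by ring,
      show ((m:ℝ)+1-w) * Real.exp (-(q*w*α)) = Real.exp (-(q*w*α)) * (nR - w) by rw [hnR]; ring,
      show nR * (Real.exp (-(q*w*α)) * Real.exp (-(q * w * (nR - s) / (m * nR)))) =
        Real.exp (-(q*w*α)) * (nR * Real.exp (-(q * w * (nR - s) / (m * nR)))) by ring,
      ← mul_add]
    apply mul_le_mul_of_nonneg_left _ (Real.exp_pos _).le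
    -- now: w(1-q)exp(qα) + (n - w) ≤ n exp(-qw(n-s)/(mn))
    have h2 : 1 - q * w * (nR - s) / (m * nR) ≤ Real.exp (-(q * w * (nR - s) / (m * nR))) := by
      have := Real.add_one_le_exp (-(q * w * (nR - s) / (m * nR)))
      linarith
    have key : (w:ℝ) * (1 - q) * (1 / (1 - q * α)) + (nR - w) ≤ nR * (1 - q * w * (nR - s) / (m * nR)) := by
      rw [show nR * (1 - q * w * (nR - s) / (m * nR)) = nR - q * w * (nR - s) / m by
        field_simp]
      have hns : nR - s = m * (1 - α) := by rw [hα]; field_simp; ring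
      rw [hns]
      have : q * (w:ℝ) * (m * (1 - α)) / m = q * w * (1 - α) := by field_simp
      rw [this]
      -- need: w(1-q)/(1-qα) ≤ w - q w (1-α) = w (1 - q(1-α))
      have hw0 : (0:ℝ) ≤ w := Nat.cast_nonneg w
      have hq1α : 0 ≤ 1 - q * (1 - α) := by nlinarith
      have hfrac : (w:ℝ) * (1 - q) * (1 / (1 - q * α)) ≤ (w:ℝ) * (1 - q * (1 - α)) := by
        rw [mul_one_div, div_le_iff₀ (by linarith)]
        nlinarith [mul_nonneg (mul_nonneg hw0 (mul_nonneg (mul_nonneg hq0 hq0) hα0)) (by linarith : (0:ℝ) ≤ 1 - α)]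
      linarith
    have hmono : nR * (1 - q * w * (nR - s) / (m * nR)) ≤ nR * Real.exp (-(q * w * (nR - s) / (m * nR))) :=
      mul_le_mul_of_nonneg_left h2 hn0.le
    have hexp : (w:ℝ) * (1 - q) * Real.exp (q * α) ≤ (w:ℝ) * (1 - q) * (1 / (1 - q * α)) := by
      apply mul_le_mul_of_nonneg_left h1
      exact mul_nonneg (Nat.cast_nonneg w) (by linarith)
    calc (w:ℝ) * (1-q) * Real.exp (q*α) + (nR - w)
        ≤ (w:ℝ) * (1-q) * (1 / (1 - q*α)) + (nR - w) := by linarith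
      _ ≤ nR * (1 - q * w * (nR - s) / (m * nR)) := key
      _ ≤ nR * Real.exp (-(q * w * (nR - s) / (m * nR))) := hmono

lemma perm_sum_invariant (n : ℕ) (S : Finset (Fin n)) (π : Equiv.Perm (Fin n)) (g : Fin n → ℝ) :
    ∑ σ : Equiv.Perm (Fin n), ∏ i ∈ S.image ⇑π, g (σ i)
      = ∑ σ : Equiv.Perm (Fin n), ∏ i ∈ S, g (σ i) := by
  have h1 : ∀ σ : Equiv.Perm (Fin n), ∏ i ∈ S.image ⇑π, g (σ i) = ∏ i ∈ S, g (σ (π i)) :=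
    fun σ => Finset.prod_image (fun a _ b _ h => π.injective h)
  simp_rw [h1]
  exact Fintype.sum_bijective (· * π) (Group.mulRight_bijective π)
    (fun σ => ∏ i ∈ S, g (σ (π i))) (fun τ => ∏ i ∈ S, g (τ i))
    (fun σ => by simp [Equiv.Perm.mul_apply])

lemma main_bound : ∀ (m : ℕ) (S W : Finset (Fin m)) (q : ℝ), 0 ≤ q → q < 1 →
    ∑ σ : Equiv.Perm (Fin m), ∏ i ∈ S, (if σ i ∈ W then 1 - q else 1)
      ≤ (Nat.factorial m : ℝ) * Real.exp (-q * W.card * S.card / m) := by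
  intro m
  induction m with
  | zero =>
    intro S W q hq0 hq1
    have hS : S = ∅ := Finset.eq_empty_of_isEmpty S
    subst hS
    simp [Fintype.card_perm]
  | succ m IH =>
    intro S W q hq0 hq1
    rcases S.eq_empty_or_nonempty with hS | ⟨i0, hi0⟩
    · subst hS
      simp [Finset.card_univ, Fintype.card_perm]
    · -- notation
      have hq1' : (0:ℝ) ≤ 1 - q := by linarith
      set g : Fin (m+1) → ℝ := fun x => if x ∈ W then 1 - q else 1 with hg
      have hgnn : ∀ x, 0 ≤ g x := by
        intro x; by_cases h : x ∈ W <;> simp [hg, h] <;> linarith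
      set π : Equiv.Perm (Fin (m+1)) := Equiv.swap i0 0 with hπ
      set S₂ : Finset (Fin (m+1)) := S.image ⇑π with hS₂
      have h0 : (0 : Fin (m+1)) ∈ S₂ := by
        rw [hS₂, ← Equiv.swap_apply_left i0 0]
        exact Finset.mem_image_of_mem _ hi0
      have hcard2 : S₂.card = S.card := Finset.card_image_of_injective _ π.injective
      have hs1 : 1 ≤ S.card := Finset.card_pos.mpr ⟨i0, hi0⟩
      have hsn : S.card ≤ m + 1 := by
        simpa using Finset.card_le_univ S
      have hwn : W.card ≤ m + 1 := by
        simpa using Finset.card_le_univ W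
      -- T and W'
      set T : Finset (Fin m) := Finset.univ.filter (fun j : Fin m => j.succ ∈ S₂) with hTdef
      set W' : Fin (m+1) → Finset (Fin m) :=
        fun p => Finset.univ.filter (fun y : Fin m => Equiv.swap 0 p y.succ ∈ W) with hW'def
      have hT : S₂.erase 0 = T.image Fin.succ := by
        ext i
        simp only [Finset.mem_erase, Finset.mem_image, hTdef, Finset.mem_filter,
          Finset.mem_univ, true_and]
        constructor
        · rintro ⟨hne, hmem⟩
          obtain ⟨j, rfl⟩ := Fin.exists_succ_eq.mpr hne
          exact ⟨j, hmem, rfl⟩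
        · rintro ⟨j, hj, rfl⟩
          exact ⟨Fin.succ_ne_zero j, hj⟩
      have hTcard : T.card = S.card - 1 := by
        have h1 : (S₂.erase 0).card = S₂.card - 1 := Finset.card_erase_of_mem h0
        have h2 : (T.image Fin.succ).card = T.card :=
          Finset.card_image_of_injective _ (Fin.succ_injective m)
        rw [hT, h2] at h1
        rw [h1, hcard2]
      have hTcardR : (T.card : ℝ) = (S.card : ℝ) - 1 := by
        rw [hTcard, Nat.cast_sub hs1]; norm_num
      -- card of W' p
      have hW'c : ∀ p, (W' p).card = (W.erase p).card := by
        intro p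
        apply Finset.card_bij (fun y _ => Equiv.swap 0 p y.succ)
        · intro y hy
          simp only [hW'def, Finset.mem_filter, Finset.mem_univ, true_and] at hy
          refine Finset.mem_erase.mpr ⟨?_, hy⟩
          intro hcon
          have : y.succ = (0 : Fin (m+1)) := by
            apply (Equiv.swap 0 p).injective
            rw [hcon, Equiv.swap_apply_left]
          exact Fin.succ_ne_zero y this
        · intro a _ b _ h
          exact Fin.succ_injective m ((Equiv.swap 0 p).injective h)
        · intro z hz
          obtain ⟨hzp, hzW⟩ := Finset.mem_erase.mp hz
          have hu : Equiv.swap 0 p z ≠ 0 := by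
            intro hcon
            apply hzp
            apply (Equiv.swap 0 p).injective
            rw [hcon, Equiv.swap_apply_right]
          obtain ⟨j, hj⟩ := Fin.exists_succ_eq.mpr hu
          refine ⟨j, ?_, ?_⟩
          · simp only [hW'def, Finset.mem_filter, Finset.mem_univ, true_and]
            rw [hj, Equiv.swap_apply_self]
            exact hzW
          · rw [hj, Equiv.swap_apply_self]
      -- the product decomposition
      have hprod : ∀ (p : Fin (m+1)) (e : Equiv.Perm (Fin m)),
          ∏ i ∈ S₂, g (Equiv.Perm.decomposeFin.symm (p, e) i)
            = g p * ∏ j ∈ T, (if e j ∈ W' p then 1 - q else 1) := by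
        intro p e
        rw [← Finset.mul_prod_erase S₂ _ h0, Equiv.Perm.decomposeFin_symm_apply_zero]
        congr 1
        rw [hT, Finset.prod_image (fun a _ b _ h => Fin.succ_injective m h)]
        apply Finset.prod_congr rfl
        intro j _
        rw [Equiv.Perm.decomposeFin_symm_apply_succ]
        simp only [hg, hW'def, Finset.mem_filter, Finset.mem_univ, true_and]
      -- rewrite the goal
      show ∑ σ : Equiv.Perm (Fin (m+1)), ∏ i ∈ S, g (σ i) ≤ _
      rw [← perm_sum_invariant (m+1) S π g, ← hS₂,
        ← Equiv.sum_comp (Equiv.Perm.decomposeFin.symm) (fun σ => ∏ i ∈ S₂, g (σ i)),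
        Fintype.sum_prod_type]
      -- bound the inner sums
      have hinner : ∀ p : Fin (m+1),
          (∑ e : Equiv.Perm (Fin m), ∏ i ∈ S₂, g (Equiv.Perm.decomposeFin.symm (p, e) i))
            ≤ g p * ((Nat.factorial m : ℝ)
                * Real.exp (-q * ((W' p).card : ℝ) * (T.card : ℝ) / m)) := by
        intro p
        simp_rw [hprod p]
        rw [← Finset.mul_sum]
        exact mul_le_mul_of_nonneg_left (IH T (W' p) q hq0 hq1) (hgnn p)
      have step1 : (∑ p : Fin (m+1), ∑ e : Equiv.Perm (Fin m),
            ∏ i ∈ S₂, g (Equiv.Perm.decomposeFin.symm (p, e) i))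
          ≤ ∑ p : Fin (m+1), g p * ((Nat.factorial m : ℝ)
              * Real.exp (-q * ((W' p).card : ℝ) * (T.card : ℝ) / m)) :=
        Finset.sum_le_sum (fun p _ => hinner p)
      refine le_trans step1 ?_
      -- now split the sum over p into W and Wᶜ
      rw [← Finset.sum_add_sum_compl W]
      have hWterm : ∀ p ∈ W, g p * ((Nat.factorial m : ℝ)
            * Real.exp (-q * ((W' p).card : ℝ) * (T.card : ℝ) / m))
          = (1 - q) * ((Nat.factorial m : ℝ)
            * Real.exp (-q * ((W.card : ℝ) - 1) * ((S.card : ℝ) - 1) / m)) := by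
        intro p hp
        have h1 : (W' p).card = W.card - 1 := by rw [hW'c p, Finset.card_erase_of_mem hp]
        have hw1 : 1 ≤ W.card := Finset.card_pos.mpr ⟨p, hp⟩
        have h2 : ((W' p).card : ℝ) = (W.card : ℝ) - 1 := by
          rw [h1, Nat.cast_sub hw1]; norm_num
        rw [h2, hTcardR]
        simp [hg, hp]
      have hWcterm : ∀ p ∈ Wᶜ, g p * ((Nat.factorial m : ℝ)
            * Real.exp (-q * ((W' p).card : ℝ) * (T.card : ℝ) / m))
          = (Nat.factorial m : ℝ)
            * Real.exp (-q * (W.card : ℝ) * ((S.card : ℝ) - 1) / m) := by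
        intro p hp
        rw [Finset.mem_compl] at hp
        have h1 : (W' p).card = W.card := by rw [hW'c p, Finset.erase_eq_of_notMem hp]
        rw [h1, hTcardR]
        simp [hg, hp]
      rw [Finset.sum_congr rfl hWterm, Finset.sum_congr rfl hWcterm,
        Finset.sum_const, Finset.sum_const, Finset.card_compl]
      simp only [nsmul_eq_mul]
      have hcc : ((Fintype.card (Fin (m+1)) - W.card : ℕ) : ℝ) = ((m:ℝ) + 1) - (W.card : ℝ) := by
        rw [Fintype.card_fin, Nat.cast_sub hwn]; push_cast; ring
      rw [hcc]
      -- apply the step inequality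
      have key := step_ineq m W.card S.card q hq0 hq1 hs1 hsn hwn
      have hfac : (0:ℝ) ≤ (Nat.factorial m : ℝ) := Nat.cast_nonneg _
      calc (W.card : ℝ) * ((1 - q) * ((Nat.factorial m : ℝ)
              * Real.exp (-q * ((W.card : ℝ) - 1) * ((S.card : ℝ) - 1) / m)))
            + (((m:ℝ) + 1) - (W.card : ℝ)) * ((Nat.factorial m : ℝ)
              * Real.exp (-q * (W.card : ℝ) * ((S.card : ℝ) - 1) / m))
          = (Nat.factorial m : ℝ) * ((W.card : ℝ) * (1 - q)
              * Real.exp (-q * ((W.card : ℝ) - 1) * ((S.card : ℝ) - 1) / m)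
            + ((m : ℝ) + 1 - W.card) * Real.exp (-q * W.card * ((S.card : ℝ) - 1) / m)) := by
            ring
        _ ≤ (Nat.factorial m : ℝ) * (((m : ℝ) + 1)
              * Real.exp (-q * W.card * S.card / ((m : ℝ) + 1))) :=
            mul_le_mul_of_nonneg_left key hfac
        _ = (Nat.factorial (m+1) : ℝ)
              * Real.exp (-q * W.card * S.card / ((m+1 : ℕ) : ℝ)) := by
            rw [Nat.factorial_succ]
            push_cast
            ring

/-- Lower-tail concentration bound for random permutations (Lemma 2.6(i)):
the number of permutations `σ` of `{1,…,n}` with `|σ(S) ∩ W| ≤ (1−δ)μ`,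
where `μ = |W|·|S|/n`, is at most `exp(−δ²μ/2)·n!`. -/
theorem stmt_1 (n : ℕ) (hn : 1 ≤ n) (S W : Finset (Fin n))
    (μ : ℝ) (hμ : μ = (W.card : ℝ) * (S.card : ℝ) / (n : ℝ))
    (δ : ℝ) (hδ0 : 0 < δ) (hδ1 : δ < 1) :
    ((Finset.univ.filter (fun σ : Equiv.Perm (Fin n) =>
        (((S.image ⇑σ) ∩ W).card : ℝ) ≤ (1 - δ) * μ)).card : ℝ)
      ≤ Real.exp (-δ ^ 2 * μ / 2) * (Nat.factorial n : ℝ) := by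
  have hr0 : (0:ℝ) < 1 - δ := by linarith
  have hr1 : (1:ℝ) - δ < 1 := by linarith
  have hμ0 : 0 ≤ μ := by rw [hμ]; positivity
  -- product = power of count
  have himg : ∀ σ : Equiv.Perm (Fin n),
      (S.image ⇑σ) ∩ W = (S.filter (fun i => σ i ∈ W)).image ⇑σ := by
    intro σ; ext x
    simp only [Finset.mem_inter, Finset.mem_image, Finset.mem_filter]
    constructor
    · rintro ⟨⟨i, hi, rfl⟩, hxW⟩; exact ⟨i, ⟨hi, hxW⟩, rfl⟩
    · rintro ⟨i, ⟨hi, hW⟩, rfl⟩; exact ⟨⟨i, hi, rfl⟩, hW⟩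
  have hXcard : ∀ σ : Equiv.Perm (Fin n),
      ((S.image ⇑σ) ∩ W).card = (S.filter (fun i => σ i ∈ W)).card := fun σ => by
    rw [himg σ, Finset.card_image_of_injective _ σ.injective]
  have hX : ∀ σ : Equiv.Perm (Fin n),
      ∏ i ∈ S, (if σ i ∈ W then 1 - δ else 1) = (1-δ) ^ (((S.image ⇑σ) ∩ W).card) := by
    intro σ
    rw [Finset.prod_ite, Finset.prod_const, Finset.prod_const_one, mul_one, hXcard σ]
  set A : Finset (Equiv.Perm (Fin n)) := Finset.univ.filter (fun σ : Equiv.Perm (Fin n) =>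
      (((S.image ⇑σ) ∩ W).card : ℝ) ≤ (1 - δ) * μ) with hA
  set E₀ : ℝ := Real.exp (Real.log (1-δ) * ((1-δ) * μ)) with hE₀
  have hlog : Real.log (1-δ) < 0 := Real.log_neg hr0 hr1
  have hterm : ∀ σ ∈ A, E₀ ≤ (1-δ) ^ (((S.image ⇑σ) ∩ W).card) := by
    intro σ hσ
    have hk : (((S.image ⇑σ) ∩ W).card : ℝ) ≤ (1 - δ) * μ := (Finset.mem_filter.mp hσ).2
    have hpow : (1-δ) ^ (((S.image ⇑σ) ∩ W).card)
        = Real.exp ((((S.image ⇑σ) ∩ W).card : ℝ) * Real.log (1-δ)) := by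
      rw [Real.exp_nat_mul, Real.exp_log hr0]
    rw [hpow, hE₀]
    apply Real.exp_le_exp.mpr
    calc Real.log (1-δ) * ((1-δ)*μ) = ((1-δ)*μ) * Real.log (1-δ) := by ring
      _ ≤ (((S.image ⇑σ) ∩ W).card : ℝ) * Real.log (1-δ) :=
          mul_le_mul_of_nonpos_right hk hlog.le
  have hsum1 : (A.card : ℝ) * E₀ ≤ ∑ σ ∈ A, (1-δ) ^ (((S.image ⇑σ) ∩ W).card) := by
    have := Finset.card_nsmul_le_sum A _ E₀ hterm
    rwa [nsmul_eq_mul] at this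
  have hsum2 : ∑ σ ∈ A, (1-δ) ^ (((S.image ⇑σ) ∩ W).card)
      ≤ ∑ σ : Equiv.Perm (Fin n), (1-δ) ^ (((S.image ⇑σ) ∩ W).card) :=
    Finset.sum_le_sum_of_subset_of_nonneg (Finset.subset_univ A)
      (fun σ _ _ => pow_nonneg hr0.le _)
  have hsum3 : ∑ σ : Equiv.Perm (Fin n), (1-δ) ^ (((S.image ⇑σ) ∩ W).card)
      ≤ (Nat.factorial n : ℝ) * Real.exp (-(δ * μ)) := by
    have hmb := main_bound n S W δ hδ0.le hδ1
    simp_rw [hX] at hmb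
    have : -δ * (W.card:ℝ) * (S.card:ℝ) / (n:ℝ) = -(δ * μ) := by rw [hμ]; ring
    rwa [this] at hmb
  have hE₀pos : 0 < E₀ := Real.exp_pos _
  have hcard : (A.card : ℝ)
      ≤ (Nat.factorial n : ℝ) * Real.exp (-(δ * μ) - Real.log (1-δ) * ((1-δ) * μ)) := by
    rw [Real.exp_sub, ← mul_div_assoc, le_div_iff₀ hE₀pos]
    calc (A.card : ℝ) * E₀ ≤ ∑ σ ∈ A, (1-δ) ^ (((S.image ⇑σ) ∩ W).card) := hsum1
      _ ≤ (Nat.factorial n : ℝ) * Real.exp (-(δ * μ)) := le_trans hsum2 hsum3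
  -- exponent comparison via sinh
  have hinner : -δ - (1-δ) * Real.log (1-δ) ≤ -δ^2/2 := by
    set u : ℝ := -Real.log (1-δ) with hu
    have hu0 : 0 < u := by rw [hu]; linarith
    have hexpu : Real.exp (-u) = 1 - δ := by
      rw [hu, neg_neg, Real.exp_log hr0]
    have hsinh := (Real.self_lt_sinh_iff.mpr hu0).le
    have h2 : Real.exp (-u) * Real.sinh u = (1 - (1-δ)^2)/2 := by
      rw [Real.sinh_eq]
      have hee : Real.exp (-u) * Real.exp u = 1 := by
        rw [← Real.exp_add]; simp
      calc Real.exp (-u) * ((Real.exp u - Real.exp (-u))/2)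
          = (Real.exp (-u) * Real.exp u - Real.exp (-u) * Real.exp (-u))/2 := by ring
        _ = (1 - (1-δ)^2)/2 := by rw [hee, hexpu]; ring
    have h3 : (1-δ) * u ≤ (1 - (1-δ)^2)/2 := by
      calc (1-δ) * u = Real.exp (-u) * u := by rw [hexpu]
        _ ≤ Real.exp (-u) * Real.sinh u :=
            mul_le_mul_of_nonneg_left hsinh (Real.exp_pos _).le
        _ = (1 - (1-δ)^2)/2 := h2
    have h4 : (1-δ) * Real.log (1-δ) = -((1-δ) * u) := by rw [hu]; ring
    nlinarith [h3]
  have hexpcomp : Real.exp (-(δ * μ) - Real.log (1-δ) * ((1-δ) * μ))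
      ≤ Real.exp (-δ^2 * μ / 2) := by
    apply Real.exp_le_exp.mpr
    have : -(δ * μ) - Real.log (1-δ) * ((1-δ) * μ) = μ * (-δ - (1-δ) * Real.log (1-δ)) := by
      ring
    rw [this]
    calc μ * (-δ - (1-δ) * Real.log (1-δ)) ≤ μ * (-δ^2/2) :=
        mul_le_mul_of_nonneg_left hinner hμ0
      _ = -δ^2 * μ / 2 := by ring
  calc (A.card : ℝ)
      ≤ (Nat.factorial n : ℝ) * Real.exp (-(δ * μ) - Real.log (1-δ) * ((1-δ) * μ)) := hcard
    _ ≤ (Nat.factorial n : ℝ) * Real.exp (-δ^2 * μ / 2) :=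
        mul_le_mul_of_nonneg_left hexpcomp (Nat.cast_nonneg _)
    _ = Real.exp (-δ ^ 2 * μ / 2) * (Nat.factorial n : ℝ) := by ring
end

section
/- Let n ≥ 1 be an integer, let S and W be subsets of {1,…,n}, let μ = |W|·|S|/n (a real number), and let δ ∈ (0,1) be a real constant. If π is a uniformly random permutation of {1,…,n} (uniform over all n! permutations), then Pr[|π(S) ∩ W| ≥ (1+δ)·μ] ≤ e^{−δ²μ/3}; equivalently, the number of permutations σ of {1,…,n} with |σ(S) ∩ W| ≥ (1+δ)·μ is at most e^{−δ²μ/3}·n!. -/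
open scoped Classical
open Finset

-- Lemma A: permutations fixing A pointwise
lemma lemA (n : ℕ) (A : Finset (Fin n)) :
    (Finset.univ.filter (fun τ : Equiv.Perm (Fin n) => ∀ j ∈ A, τ j = j)).card
      = (n - A.card).factorial := by
  have e : {τ : Equiv.Perm (Fin n) // ∀ j ∈ A, τ j = j} ≃
      Equiv.Perm {x : Fin n // x ∉ A} := by
    refine (Equiv.subtypeEquivProp ?_).trans
      (Equiv.Perm.subtypeEquivSubtypePerm (fun x : Fin n => x ∉ A)).symm
    funext τ
    simp only [eq_iff_iff]
    constructor
    · intro h a ha; exact h a (not_not.mp ha)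
    · intro h j hj; exact h j (not_not.mpr hj)
  have h1 : (Finset.univ.filter (fun τ : Equiv.Perm (Fin n) => ∀ j ∈ A, τ j = j)).card
      = Fintype.card {τ : Equiv.Perm (Fin n) // ∀ j ∈ A, τ j = j} := by
    rw [Fintype.card_subtype]
  rw [h1, Fintype.card_congr e, Fintype.card_perm]
  congr 1
  rw [Fintype.card_subtype_compl]  -- maybe wrong name
  simp [Fintype.card_fin]

-- Lemma B: permutations agreeing with σ₀ on T
lemma lemB (n : ℕ) (T : Finset (Fin n)) (σ₀ : Equiv.Perm (Fin n)) :
    (Finset.univ.filter (fun σ : Equiv.Perm (Fin n) => ∀ i ∈ T, σ i = σ₀ i)).card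
      = (n - T.card).factorial := by
  have key : (Finset.univ.filter (fun σ : Equiv.Perm (Fin n) => ∀ i ∈ T, σ i = σ₀ i)).card
      = (Finset.univ.filter (fun τ : Equiv.Perm (Fin n) =>
          ∀ j ∈ T.image σ₀, τ j = j)).card := by
    apply Finset.card_bij (fun σ _ => σ * σ₀⁻¹)
    · intro σ hσ
      simp only [Finset.mem_filter, Finset.mem_univ, true_and] at hσ ⊢
      intro j hj
      rw [Finset.mem_image] at hj
      obtain ⟨i, hi, rfl⟩ := hj
      simp [hσ i hi]
    · intro a ha b hb hab
      exact mul_right_cancel hab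
    · intro τ hτ
      refine ⟨τ * σ₀, ?_, by group⟩
      simp only [Finset.mem_filter, Finset.mem_univ, true_and] at hτ ⊢
      intro i hi
      simpa using hτ (σ₀ i) (Finset.mem_image_of_mem _ hi)
  rw [key, lemA]
  congr 1
  rw [Finset.card_image_of_injective _ σ₀.injective]

-- count of injective-into-W functions
lemma lemInj (n : ℕ) (T W : Finset (Fin n)) :
    (Finset.univ.filter (fun f : ({x // x ∈ T} → Fin n) =>
        Function.Injective f ∧ ∀ i, f i ∈ W)).card
      ≤ W.card.descFactorial T.card := by
  have h1 : (Finset.univ.filter (fun f : ({x // x ∈ T} → Fin n) =>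
        Function.Injective f ∧ ∀ i, f i ∈ W)).card
      = Fintype.card {f : ({x // x ∈ T} → Fin n) //
          Function.Injective f ∧ ∀ i, f i ∈ W} := (Fintype.card_subtype _).symm
  rw [h1]
  have h2 : Fintype.card ({x // x ∈ T} ↪ {x // x ∈ W})
      = W.card.descFactorial T.card := by
    rw [Fintype.card_embedding_eq, Fintype.card_coe, Fintype.card_coe]
  rw [← h2]
  apply Fintype.card_le_of_injective
    (fun f => ⟨fun i => ⟨f.1 i, f.2.2 i⟩,
      fun a b h => f.2.1 (congrArg Subtype.val h)⟩)
  intro f g h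
  apply Subtype.ext
  funext i
  have := congrArg (fun e => (e : {x // x ∈ T} ↪ {x // x ∈ W}) i) h
  exact congrArg Subtype.val this

-- main count
lemma lemN (n : ℕ) (T W : Finset (Fin n)) :
    (Finset.univ.filter (fun σ : Equiv.Perm (Fin n) => ∀ i ∈ T, σ i ∈ W)).card
      ≤ W.card.descFactorial T.card * (n - T.card).factorial := by
  classical
  set good := Finset.univ.filter (fun σ : Equiv.Perm (Fin n) => ∀ i ∈ T, σ i ∈ W) with hgood
  set res : Equiv.Perm (Fin n) → ({x // x ∈ T} → Fin n) := fun σ i => σ i.1 with hres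
  have hfib := Finset.card_eq_sum_card_fiberwise
    (f := res) (s := good) (t := good.image res) (fun x hx => Finset.mem_image_of_mem _ hx)
  have hfibcard : ∀ f ∈ good.image res,
      (good.filter (fun σ => res σ = f)).card = (n - T.card).factorial := by
    intro f hf
    rw [Finset.mem_image] at hf
    obtain ⟨σ₀, hσ₀, rfl⟩ := hf
    have hset : good.filter (fun σ => res σ = res σ₀)
        = Finset.univ.filter (fun σ : Equiv.Perm (Fin n) => ∀ i ∈ T, σ i = σ₀ i) := by
      ext σ
      simp only [hgood, Finset.mem_filter, Finset.mem_univ, true_and]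
      constructor
      · rintro ⟨-, h2⟩ i hi
        exact congrFun h2 ⟨i, hi⟩
      · intro h
        have hmem : ∀ i ∈ T, σ i ∈ W := by
          intro i hi; rw [h i hi]
          exact (Finset.mem_filter.mp hσ₀).2 i hi
        exact ⟨hmem, funext fun i => h i.1 i.2⟩
    rw [hset, lemB]
  have hcard : good.card = (good.image res).card * (n - T.card).factorial := by
    rw [hfib, Finset.sum_congr rfl hfibcard, Finset.sum_const, smul_eq_mul]
  rw [hcard]
  apply Nat.mul_le_mul_right
  calc (good.image res).card
      ≤ (Finset.univ.filter (fun f : ({x // x ∈ T} → Fin n) =>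
          Function.Injective f ∧ ∀ i, f i ∈ W)).card := by
        apply Finset.card_le_card
        intro f hf
        rw [Finset.mem_image] at hf
        obtain ⟨σ, hσ, rfl⟩ := hf
        simp only [Finset.mem_filter, Finset.mem_univ, true_and]
        constructor
        · intro a b h
          exact Subtype.ext (σ.injective h)
        · intro i
          exact (Finset.mem_filter.mp hσ).2 i.1 i.2
    _ ≤ W.card.descFactorial T.card := lemInj n T W

lemma lemDF (w n : ℕ) (hw : w ≤ n) :
    ∀ k : ℕ, w.descFactorial k * n ^ k ≤ w ^ k * n.descFactorial k
  | 0 => by simp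
  | (k+1) => by
    rw [Nat.descFactorial_succ, Nat.descFactorial_succ, pow_succ, pow_succ]
    have h1 : (w - k) * n ≤ w * (n - k) := by
      rw [Nat.sub_mul, Nat.mul_sub]
      apply Nat.sub_le_sub_left
      calc w * k ≤ n * k := Nat.mul_le_mul_right k hw
        _ = k * n := Nat.mul_comm n k
    calc (w - k) * w.descFactorial k * (n ^ k * n)
        = ((w - k) * n) * (w.descFactorial k * n ^ k) := by ring
      _ ≤ (w * (n - k)) * (w ^ k * n.descFactorial k) :=
          Nat.mul_le_mul h1 (lemDF w n hw k)
      _ = w ^ k * w * ((n - k) * n.descFactorial k) := by ring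

lemma lemNum (w n k : ℕ) (hw : w ≤ n) (hk : k ≤ n) :
    w.descFactorial k * (n - k).factorial * n ^ k ≤ w ^ k * n.factorial := by
  rw [← Nat.factorial_mul_descFactorial hk]
  calc w.descFactorial k * (n - k).factorial * n ^ k
      = (w.descFactorial k * n ^ k) * (n - k).factorial := by ring
    _ ≤ (w ^ k * n.descFactorial k) * (n - k).factorial := Nat.mul_le_mul_right _ (lemDF w n hw k)
    _ = w ^ k * ((n - k).factorial * n.descFactorial k) := by ring

lemma lemLog2 {x : ℝ} (hx0 : 0 ≤ x) (hx1 : x ≤ 1) :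
    2 * x / 3 ≤ Real.log (1 + x) := by
  have hc := strictConcaveOn_log_Ioi.concaveOn.2
    (Set.mem_Ioi.mpr one_pos) (Set.mem_Ioi.mpr two_pos)
    (by linarith : (0:ℝ) ≤ 1 - x) hx0 (by ring)
  simp only [smul_eq_mul, Real.log_one, mul_zero, zero_add, mul_one] at hc
  have h2 : (1:ℝ) - x + x * 2 = 1 + x := by ring
  rw [h2] at hc
  have hl2 : (0.6931471803 : ℝ) < Real.log 2 := Real.log_two_gt_d9
  nlinarith

lemma lemKey {x : ℝ} (hx0 : 0 ≤ x) (hx1 : x ≤ 1) :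
    x + x ^ 2 / 3 ≤ (1 + x) * Real.log (1 + x) := by
  set f : ℝ → ℝ := fun t => (1 + t) * Real.log (1 + t) - (t + t ^ 2 / 3) with hf
  have hder : ∀ t ∈ Set.Ioo (0:ℝ) 1, HasDerivAt f (Real.log (1 + t) - 2 * t / 3) t := by
    intro t ht
    have h1t : (0:ℝ) < 1 + t := by linarith [ht.1]
    have h1 : HasDerivAt (fun t : ℝ => 1 + t) 1 t := by
      simpa using (hasDerivAt_id t).const_add 1
    have h2 : HasDerivAt (fun t : ℝ => Real.log (1 + t)) (1 / (1 + t)) t := by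
      simpa using h1.log (ne_of_gt h1t)
    have h3 := h1.fun_mul h2
    have h4 : HasDerivAt (fun t : ℝ => t + t ^ 2 / 3) (1 + 2 * t / 3) t := by
      have := ((hasDerivAt_pow 2 t).div_const 3).const_add 0
      simpa using (hasDerivAt_id' t).fun_add ((hasDerivAt_pow 2 t).div_const 3)
    have h5 := h3.fun_sub h4
    refine h5.congr_deriv ?_
    rw [mul_one_div_cancel h1t.ne']
    ring
  have hmono : MonotoneOn f (Set.Icc (0:ℝ) 1) := by
    apply monotoneOn_of_deriv_nonneg (convex_Icc 0 1)
    · apply ContinuousOn.sub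
      · apply ContinuousOn.mul (by fun_prop)
        apply ContinuousOn.log (by fun_prop)
        intro t ht
        simp only [Set.mem_Icc] at ht
        intro h; linarith [ht.1]
      · fun_prop
    · rw [interior_Icc]
      intro t ht
      exact (hder t ht).differentiableAt.differentiableWithinAt
    · rw [interior_Icc]
      intro t ht
      rw [(hder t ht).deriv]
      have := lemLog2 (le_of_lt ht.1) (le_of_lt ht.2)
      linarith
  have h0 : f 0 = 0 := by simp [hf]
  have := hmono (Set.mem_Icc.mpr ⟨le_refl 0, zero_le_one⟩) (Set.mem_Icc.mpr ⟨hx0, hx1⟩) hx0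
  rw [h0] at this
  simp only [hf] at this
  linarith

/-- Upper-tail concentration bound for random permutations (Lemma 2.6(ii)):
the number of permutations `σ` of `{1,…,n}` with `|σ(S) ∩ W| ≥ (1+δ)μ`,
where `μ = |W|·|S|/n`, is at most `exp(−δ²μ/3)·n!`. -/
theorem stmt_2 (n : ℕ) (hn : 1 ≤ n) (S W : Finset (Fin n))
    (μ : ℝ) (hμ : μ = (W.card : ℝ) * (S.card : ℝ) / (n : ℝ))
    (δ : ℝ) (hδ0 : 0 < δ) (hδ1 : δ < 1) :
    ((Finset.univ.filter (fun σ : Equiv.Perm (Fin n) =>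
        (1 + δ) * μ ≤ (((S.image ⇑σ) ∩ W).card : ℝ))).card : ℝ)
      ≤ Real.exp (-δ ^ 2 * μ / 3) * (Nat.factorial n : ℝ) := by
  have hnpos : (0:ℝ) < n := by exact_mod_cast hn
  have hμ0 : 0 ≤ μ := by rw [hμ]; positivity
  have hb1 : (1:ℝ) < 1 + δ := by linarith
  have hb0 : (0:ℝ) < 1 + δ := by linarith
  -- X σ
  set X : Equiv.Perm (Fin n) → ℕ := fun σ => (S.filter fun i => σ i ∈ W).card with hX
  have hXeq : ∀ σ : Equiv.Perm (Fin n), ((S.image ⇑σ) ∩ W).card = X σ := by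
    intro σ
    have himg : (S.image ⇑σ) ∩ W = (S.filter fun i => σ i ∈ W).image ⇑σ := by
      ext j
      simp only [Finset.mem_inter, Finset.mem_image, Finset.mem_filter]
      constructor
      · rintro ⟨⟨i, hi, rfl⟩, hw⟩; exact ⟨i, ⟨hi, hw⟩, rfl⟩
      · rintro ⟨i, ⟨hi, hw⟩, rfl⟩; exact ⟨⟨i, hi, rfl⟩, hw⟩
    rw [himg, Finset.card_image_of_injective _ σ.injective]
  set F := Finset.univ.filter (fun σ : Equiv.Perm (Fin n) =>
      (1 + δ) * μ ≤ (((S.image ⇑σ) ∩ W).card : ℝ)) with hF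
  set B : ℝ := (1 + δ) ^ ((1 + δ) * μ) with hB
  have hBpos : 0 < B := Real.rpow_pos_of_pos hb0 _
  -- Markov inequality step
  have markov : (F.card : ℝ) * B ≤ ∑ σ : Equiv.Perm (Fin n), (1 + δ) ^ (X σ) := by
    calc (F.card : ℝ) * B = ∑ _σ ∈ F, B := by rw [Finset.sum_const, nsmul_eq_mul]
      _ ≤ ∑ σ ∈ F, (1 + δ) ^ (X σ) := by
          apply Finset.sum_le_sum
          intro σ hσ
          have hXσ : (1 + δ) * μ ≤ (X σ : ℝ) := by
            have := (Finset.mem_filter.mp hσ).2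
            rwa [hXeq σ] at this
          calc B ≤ (1 + δ) ^ ((X σ : ℝ)) :=
                (Real.rpow_le_rpow_left_iff hb1).mpr hXσ
            _ = (1 + δ) ^ (X σ) := Real.rpow_natCast _ _
      _ ≤ ∑ σ : Equiv.Perm (Fin n), (1 + δ) ^ (X σ) := by
          apply Finset.sum_le_sum_of_subset_of_nonneg (Finset.subset_univ F)
          intro σ _ _
          positivity
  -- expansion of the sum
  have expand : ∑ σ : Equiv.Perm (Fin n), ((1:ℝ) + δ) ^ (X σ)
      = ∑ T ∈ S.powerset, δ ^ T.card *
          ((Finset.univ.filter (fun σ : Equiv.Perm (Fin n) => ∀ i ∈ T, σ i ∈ W)).card : ℝ) := by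
    have hprod : ∀ σ : Equiv.Perm (Fin n), ((1:ℝ) + δ) ^ (X σ)
        = ∏ i ∈ S, ((δ * if σ i ∈ W then 1 else 0) + 1) := by
      intro σ
      rw [← Finset.prod_filter_mul_prod_filter_not S (fun i => σ i ∈ W)
        (fun i => ((δ * if σ i ∈ W then 1 else 0) + 1))]
      have h1 : ∏ i ∈ S.filter (fun i => σ i ∈ W),
          ((δ * if σ i ∈ W then 1 else 0) + 1) = (1 + δ) ^ (X σ) := by
        rw [Finset.prod_congr rfl (g := fun _ => 1 + δ)
          (fun i hi => by simp [(Finset.mem_filter.mp hi).2]; ring),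
          Finset.prod_const, hX]
      have h2 : ∏ i ∈ S.filter (fun i => ¬ σ i ∈ W),
          ((δ * if σ i ∈ W then 1 else 0) + 1) = 1 := by
        apply Finset.prod_eq_one
        intro i hi
        simp [(Finset.mem_filter.mp hi).2]
      rw [h1, h2, mul_one]
    calc ∑ σ : Equiv.Perm (Fin n), ((1:ℝ) + δ) ^ (X σ)
        = ∑ σ : Equiv.Perm (Fin n), ∑ T ∈ S.powerset,
            (∏ i ∈ T, (δ * if σ i ∈ W then 1 else 0)) * ∏ _i ∈ S \ T, (1:ℝ) := by
          refine Finset.sum_congr rfl (fun σ _ => ?_)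
          rw [hprod σ, Finset.prod_add]
      _ = ∑ T ∈ S.powerset, ∑ σ : Equiv.Perm (Fin n),
            (∏ i ∈ T, (δ * if σ i ∈ W then 1 else 0)) * ∏ _i ∈ S \ T, (1:ℝ) :=
          Finset.sum_comm
      _ = ∑ T ∈ S.powerset, δ ^ T.card *
          ((Finset.univ.filter (fun σ : Equiv.Perm (Fin n) => ∀ i ∈ T, σ i ∈ W)).card : ℝ) := by
          refine Finset.sum_congr rfl (fun T _ => ?_)
          rw [← Finset.sum_boole, Finset.mul_sum]
          refine Finset.sum_congr rfl (fun σ _ => ?_)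
          rw [Finset.prod_const_one, mul_one, Finset.prod_mul_distrib,
            Finset.prod_const, Finset.prod_boole]
          congr
  -- bound each term
  have hw : W.card ≤ n := by
    have := Finset.card_le_univ W
    simpa using this
  have bound : ∑ T ∈ S.powerset, δ ^ T.card *
        ((Finset.univ.filter (fun σ : Equiv.Perm (Fin n) => ∀ i ∈ T, σ i ∈ W)).card : ℝ)
      ≤ Real.exp (δ * μ) * (Nat.factorial n : ℝ) := by
    have hterm : ∀ T ∈ S.powerset, δ ^ T.card *
        ((Finset.univ.filter (fun σ : Equiv.Perm (Fin n) => ∀ i ∈ T, σ i ∈ W)).card : ℝ)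
        ≤ (δ * ((W.card : ℝ) / n)) ^ T.card * (Nat.factorial n : ℝ) := by
      intro T _
      have hk : T.card ≤ n := by
        have := Finset.card_le_univ T
        simpa using this
      have hnat : ((Finset.univ.filter (fun σ : Equiv.Perm (Fin n) =>
          ∀ i ∈ T, σ i ∈ W)).card) * n ^ T.card ≤ W.card ^ T.card * n.factorial := by
        calc (Finset.univ.filter (fun σ : Equiv.Perm (Fin n) =>
              ∀ i ∈ T, σ i ∈ W)).card * n ^ T.card
            ≤ (W.card.descFactorial T.card * (n - T.card).factorial) * n ^ T.card :=
              Nat.mul_le_mul_right _ (lemN n T W)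
          _ ≤ W.card ^ T.card * n.factorial := lemNum W.card n T.card hw hk
      have hreal : ((Finset.univ.filter (fun σ : Equiv.Perm (Fin n) =>
          ∀ i ∈ T, σ i ∈ W)).card : ℝ)
          ≤ ((W.card : ℝ) / n) ^ T.card * (Nat.factorial n : ℝ) := by
        rw [div_pow, div_mul_eq_mul_div, le_div_iff₀ (by positivity)]
        exact_mod_cast hnat
      calc δ ^ T.card * ((Finset.univ.filter (fun σ : Equiv.Perm (Fin n) =>
              ∀ i ∈ T, σ i ∈ W)).card : ℝ)
          ≤ δ ^ T.card * (((W.card : ℝ) / n) ^ T.card * (Nat.factorial n : ℝ)) :=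
            mul_le_mul_of_nonneg_left hreal (by positivity)
        _ = (δ * ((W.card : ℝ) / n)) ^ T.card * (Nat.factorial n : ℝ) := by
            rw [mul_pow]; ring
    calc ∑ T ∈ S.powerset, δ ^ T.card *
          ((Finset.univ.filter (fun σ : Equiv.Perm (Fin n) => ∀ i ∈ T, σ i ∈ W)).card : ℝ)
        ≤ ∑ T ∈ S.powerset, (δ * ((W.card : ℝ) / n)) ^ T.card * (Nat.factorial n : ℝ) :=
          Finset.sum_le_sum hterm
      _ = ((δ * ((W.card : ℝ) / n)) + 1) ^ S.card * (Nat.factorial n : ℝ) := by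
          rw [← Finset.sum_mul]
          congr 1
          have := Finset.prod_add (fun _ : Fin n => δ * ((W.card : ℝ) / n))
            (fun _ => (1:ℝ)) S
          rw [Finset.prod_const] at this
          rw [this]
          refine Finset.sum_congr rfl (fun T _ => ?_)
          rw [Finset.prod_const, Finset.prod_const_one, mul_one]
      _ ≤ Real.exp (δ * μ) * (Nat.factorial n : ℝ) := by
          apply mul_le_mul_of_nonneg_right _ (by positivity)
          have h1 : (δ * ((W.card : ℝ) / n)) + 1 ≤ Real.exp (δ * ((W.card : ℝ) / n)) :=
            Real.add_one_le_exp _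
          calc ((δ * ((W.card : ℝ) / n)) + 1) ^ S.card
              ≤ Real.exp (δ * ((W.card : ℝ) / n)) ^ S.card :=
                pow_le_pow_left₀ (by positivity) h1 _
            _ = Real.exp (δ * ((W.card : ℝ) / n) * S.card) := by
                rw [← Real.exp_nat_mul]; ring_nf
            _ = Real.exp (δ * μ) := by
                congr 1
                rw [hμ]; ring
  -- combine
  have hKey := lemKey hδ0.le hδ1.le
  have hL : δ * μ ≤ -δ ^ 2 * μ / 3 + Real.log (1 + δ) * ((1 + δ) * μ) := by
    nlinarith [mul_le_mul_of_nonneg_right hKey hμ0]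
  have hexp : Real.exp (δ * μ) ≤ Real.exp (-δ ^ 2 * μ / 3) * B := by
    rw [hB, Real.rpow_def_of_pos hb0, ← Real.exp_add]
    exact Real.exp_le_exp.mpr hL
  have final : (F.card : ℝ) * B ≤ Real.exp (δ * μ) * (Nat.factorial n : ℝ) :=
    markov.trans (le_of_eq expand |>.trans bound)
  have : (F.card : ℝ) * B ≤ (Real.exp (-δ ^ 2 * μ / 3) * (Nat.factorial n : ℝ)) * B := by
    calc (F.card : ℝ) * B ≤ Real.exp (δ * μ) * (Nat.factorial n : ℝ) := final
      _ ≤ (Real.exp (-δ ^ 2 * μ / 3) * B) * (Nat.factorial n : ℝ) :=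
          mul_le_mul_of_nonneg_right hexp (by positivity)
      _ = (Real.exp (-δ ^ 2 * μ / 3) * (Nat.factorial n : ℝ)) * B := by ring
  exact le_of_mul_le_mul_right this hBpos
end

section
/- Let n ≥ 1 be an integer, let S and W be subsets of {1,…,n}, and let μ = |W|·|S|/n (a real number). If π is a uniformly random permutation of {1,…,n} (uniform over all n! permutations), then for any natural number d with d ≥ 6μ, Pr[|π(S) ∩ W| ≥ d] ≤ 2^{−d}; equivalently, the number of permutations σ of {1,…,n} with |σ(S) ∩ W| ≥ d is at most 2^{−d}·n!. -/
open scoped Classical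


-- number of permutations fixing each element of T
lemma aux_fix_card (n : ℕ) (T : Finset (Fin n)) :
    (Finset.univ.filter (fun σ : Equiv.Perm (Fin n) => ∀ x ∈ T, σ x = x)).card
      = Nat.factorial (n - T.card) := by
  have e := Equiv.Perm.subtypeEquivSubtypePerm (fun a : Fin n => a ∉ T)
  have hc : Fintype.card {f : Equiv.Perm (Fin n) // ∀ a, ¬ a ∉ T → f a = a}
      = Nat.factorial (n - T.card) := by
    rw [← Fintype.card_congr e, Fintype.card_perm]
    congr 1
    have : Fintype.card {a : Fin n // a ∉ T} = Fintype.card (Fin n) - Fintype.card {a : Fin n // a ∈ T} :=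
      Fintype.card_subtype_compl _
    rw [this, Fintype.card_fin]
    congr 1
    exact Fintype.card_coe T
  rw [← hc, Fintype.card_subtype]
  congr 1
  ext σ
  simp [not_not]

lemma aux_image_card (n : ℕ) (T W : Finset (Fin n)) :
    ((Finset.univ.filter (fun σ : Equiv.Perm (Fin n) => ∀ x ∈ T, σ x ∈ W)).image
        (fun σ (t : ↥T) => σ (t : Fin n))).card
      ≤ W.card.descFactorial T.card := by
  set A := Finset.univ.filter (fun σ : Equiv.Perm (Fin n) => ∀ x ∈ T, σ x ∈ W) with hA
  set f : Equiv.Perm (Fin n) → (↥T → Fin n) := fun σ (t : ↥T) => σ (t : Fin n) with hf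
  have h1 : ∀ g ∈ A.image f, ∀ t : ↥T, g t ∈ W := by
    intro g hg t
    obtain ⟨σ, hσ, rfl⟩ := Finset.mem_image.1 hg
    exact (Finset.mem_filter.1 hσ).2 t t.2
  have h2 : ∀ g ∈ A.image f, Function.Injective g := by
    intro g hg a b hab
    obtain ⟨σ, hσ, rfl⟩ := Finset.mem_image.1 hg
    exact Subtype.ext (σ.injective hab)
  have := Fintype.card_le_of_injective
    (fun x : ↥(A.image f) => (⟨fun t => (⟨x.1 t, h1 x.1 x.2 t⟩ : ↥W),
        fun a b hab => h2 x.1 x.2 (congrArg Subtype.val hab)⟩ : ↥T ↪ ↥W))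
    (by
      intro x y hxy
      apply Subtype.ext
      funext t
      have := congrArg (fun e : ↥T ↪ ↥W => (e t : Fin n)) hxy
      exact this)
  rw [Fintype.card_coe, Fintype.card_embedding_eq, Fintype.card_coe, Fintype.card_coe] at this
  exact this

lemma aux_AT_card (n : ℕ) (T W : Finset (Fin n)) :
    (Finset.univ.filter (fun σ : Equiv.Perm (Fin n) => ∀ x ∈ T, σ x ∈ W)).card
      ≤ Nat.factorial (n - T.card) * W.card.descFactorial T.card := by
  set A := Finset.univ.filter (fun σ : Equiv.Perm (Fin n) => ∀ x ∈ T, σ x ∈ W) with hA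
  set f : Equiv.Perm (Fin n) → (↥T → Fin n) := fun σ (t : ↥T) => σ (t : Fin n) with hf
  have hfib : ∀ a ∈ A.image f, (A.filter (fun σ => f σ = a)).card ≤ Nat.factorial (n - T.card) := by
    intro a ha
    obtain ⟨σ₀, hσ₀, hfσ₀⟩ := Finset.mem_image.1 ha
    rw [← aux_fix_card n T]
    apply Finset.card_le_card_of_injOn (fun σ => σ₀⁻¹ * σ)
    · intro σ hσ
      simp only [Finset.mem_coe, Finset.mem_filter, Finset.mem_univ, true_and] at hσ ⊢
      intro x hx
      have : σ x = σ₀ x := by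
        have := congrFun (hσ.2.trans hfσ₀.symm) ⟨x, hx⟩
        exact this
      simp [Equiv.Perm.mul_apply, this]
    · intro a _ b _ hab
      exact mul_left_cancel hab
  calc A.card ≤ Nat.factorial (n - T.card) * (A.image f).card :=
        Finset.card_le_mul_card_image A _ hfib
    _ ≤ Nat.factorial (n - T.card) * W.card.descFactorial T.card := by
        exact Nat.mul_le_mul_left _ (aux_image_card n T W)

lemma aux_count (n d : ℕ) (S W : Finset (Fin n)) :
    (Finset.univ.filter (fun σ : Equiv.Perm (Fin n) =>
        d ≤ ((S.image ⇑σ) ∩ W).card)).card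
      ≤ S.card.choose d * (Nat.factorial (n - d) * W.card.descFactorial d) := by
  have hsub : (Finset.univ.filter (fun σ : Equiv.Perm (Fin n) =>
        d ≤ ((S.image ⇑σ) ∩ W).card))
      ⊆ (S.powersetCard d).biUnion (fun T =>
        Finset.univ.filter (fun σ : Equiv.Perm (Fin n) => ∀ x ∈ T, σ x ∈ W)) := by
    intro σ hσ
    simp only [Finset.mem_filter, Finset.mem_univ, true_and] at hσ
    obtain ⟨U, hUsub, hUcard⟩ := Finset.exists_subset_card_eq hσ
    refine Finset.mem_biUnion.2 ⟨U.image ⇑σ.symm, ?_, ?_⟩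
    · refine Finset.mem_powersetCard.2 ⟨?_, ?_⟩
      · intro x hx
        obtain ⟨u, hu, rfl⟩ := Finset.mem_image.1 hx
        have := hUsub hu
        obtain ⟨y, hy, rfl⟩ := Finset.mem_image.1 (Finset.mem_inter.1 this).1
        simpa using hy
      · rw [Finset.card_image_of_injective _ σ.symm.injective, hUcard]
    · simp only [Finset.mem_filter, Finset.mem_univ, true_and]
      intro x hx
      obtain ⟨u, hu, rfl⟩ := Finset.mem_image.1 hx
      simpa using (Finset.mem_inter.1 (hUsub hu)).2
  calc _ ≤ ((S.powersetCard d).biUnion (fun T =>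
        Finset.univ.filter (fun σ : Equiv.Perm (Fin n) => ∀ x ∈ T, σ x ∈ W))).card :=
        Finset.card_le_card hsub
    _ ≤ ∑ T ∈ S.powersetCard d,
        (Finset.univ.filter (fun σ : Equiv.Perm (Fin n) => ∀ x ∈ T, σ x ∈ W)).card :=
        Finset.card_biUnion_le
    _ ≤ ∑ T ∈ S.powersetCard d, Nat.factorial (n - d) * W.card.descFactorial d := by
        refine Finset.sum_le_sum fun T hT => ?_
        have hTcard : T.card = d := (Finset.mem_powersetCard.1 hT).2
        simpa [hTcard] using aux_AT_card n T W
    _ = S.card.choose d * (Nat.factorial (n - d) * W.card.descFactorial d) := by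
        rw [Finset.sum_const, Finset.card_powersetCard, smul_eq_mul]

lemma aux_desc_ratio (w n d : ℕ) (h : w ≤ n) :
    w.descFactorial d * n ^ d ≤ n.descFactorial d * w ^ d := by
  rw [Nat.descFactorial_eq_prod_range, Nat.descFactorial_eq_prod_range]
  have hn : n ^ d = ∏ _i ∈ Finset.range d, n := by simp
  have hw : w ^ d = ∏ _i ∈ Finset.range d, w := by simp
  rw [hn, hw, ← Finset.prod_mul_distrib, ← Finset.prod_mul_distrib]
  refine Finset.prod_le_prod' fun i _ => ?_
  calc (w - i) * n = w * n - i * n := by rw [Nat.sub_mul]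
    _ ≤ w * n - i * w := Nat.sub_le_sub_left (Nat.mul_le_mul_left i h) _
    _ = (n - i) * w := by rw [Nat.sub_mul, Nat.mul_comm w n]

lemma aux_pow_le_factorial (d : ℕ) :
    ((d : ℝ)) ^ d ≤ (Nat.factorial d : ℝ) * 3 ^ d := by
  have hd : ((d : ℝ)) ^ d / (Nat.factorial d : ℝ) ≤ Real.exp d := by
    refine le_trans ?_ (Real.sum_le_exp_of_nonneg (by positivity) (d + 1))
    have := Finset.single_le_sum (f := fun i => (d : ℝ) ^ i / (Nat.factorial i : ℝ))
      (fun i _ => by positivity) (Finset.self_mem_range_succ d)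
    simpa using this
  have hexp : Real.exp d ≤ 3 ^ d := by
    have h1 : Real.exp (d : ℝ) = Real.exp 1 ^ d := by
      rw [← Real.exp_nat_mul]; norm_num
    rw [h1]
    exact pow_le_pow_left₀ (Real.exp_pos 1).le
      (le_trans Real.exp_one_lt_d9.le (by norm_num)) d
  have hfac : (0 : ℝ) < (Nat.factorial d : ℝ) := by
    exact_mod_cast Nat.factorial_pos d
  calc ((d : ℝ)) ^ d = ((d : ℝ)) ^ d / (Nat.factorial d : ℝ) * (Nat.factorial d : ℝ) := by
        field_simp
    _ ≤ Real.exp d * (Nat.factorial d : ℝ) := by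
        exact mul_le_mul_of_nonneg_right hd hfac.le
    _ ≤ 3 ^ d * (Nat.factorial d : ℝ) := mul_le_mul_of_nonneg_right hexp hfac.le
    _ = (Nat.factorial d : ℝ) * 3 ^ d := mul_comm _ _

lemma aux_final (n s w d : ℕ) (hn : 1 ≤ n) (hs : s ≤ n) (hw : w ≤ n)
    (hd : 6 * ((w : ℝ) * (s : ℝ) / (n : ℝ)) ≤ (d : ℝ)) :
    ((s.choose d * (Nat.factorial (n - d) * w.descFactorial d) : ℕ) : ℝ)
      ≤ (2 : ℝ) ^ (-(d : ℝ)) * (Nat.factorial n : ℝ) := by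
  have hrpow : (2 : ℝ) ^ (-(d : ℝ)) = ((2 : ℝ) ^ d)⁻¹ := by
    rw [Real.rpow_neg (by norm_num), Real.rpow_natCast]
  rw [hrpow]
  have h2pos : (0 : ℝ) < 2 ^ d := by positivity
  by_cases hcase : w < d ∨ s < d
  · rcases hcase with h | h
    · rw [Nat.descFactorial_eq_zero_iff_lt.2 h]
      simp only [Nat.mul_zero, Nat.cast_zero]
      positivity
    · rw [Nat.choose_eq_zero_of_lt h]
      simp only [Nat.zero_mul, Nat.cast_zero]
      positivity
  push_neg at hcase
  obtain ⟨hdw, hds⟩ := hcase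
  have hdn : d ≤ n := hdw.trans hw
  have hn0 : (0 : ℝ) < (n : ℝ) := by exact_mod_cast hn
  -- key inequality
  have hD : (0 : ℝ) < (Nat.factorial d : ℝ) := by exact_mod_cast Nat.factorial_pos d
  have hA : ((s.choose d : ℝ)) * (Nat.factorial d : ℝ) ≤ (s : ℝ) ^ d := by
    have : Nat.factorial d * s.choose d ≤ s ^ d := by
      rw [← Nat.descFactorial_eq_factorial_mul_choose]
      exact Nat.descFactorial_le_pow s d
    calc ((s.choose d : ℝ)) * (Nat.factorial d : ℝ)
        = ((Nat.factorial d * s.choose d : ℕ) : ℝ) := by push_cast; ring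
      _ ≤ (s : ℝ) ^ d := by exact_mod_cast this
  have hB : ((w.descFactorial d : ℝ)) * (n : ℝ) ^ d
      ≤ ((n.descFactorial d : ℝ)) * (w : ℝ) ^ d := by
    exact_mod_cast aux_desc_ratio w n d hw
  have hkey : (s : ℝ) ^ d * (w : ℝ) ^ d * 2 ^ d
      ≤ (Nat.factorial d : ℝ) * (n : ℝ) ^ d := by
    have h1 : 2 * ((w : ℝ) * (s : ℝ)) ≤ (d : ℝ) * (n : ℝ) / 3 := by
      have h6 : 6 * ((w : ℝ) * (s : ℝ)) ≤ (d : ℝ) * (n : ℝ) := by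
        have h7 := mul_le_mul_of_nonneg_right hd hn0.le
        have h8 : (w : ℝ) * (s : ℝ) / (n : ℝ) * (n : ℝ) = (w : ℝ) * (s : ℝ) :=
          div_mul_cancel₀ _ hn0.ne'
        nlinarith [h7, h8]
      linarith
    calc (s : ℝ) ^ d * (w : ℝ) ^ d * 2 ^ d = (2 * ((w : ℝ) * (s : ℝ))) ^ d := by
          rw [mul_pow, mul_pow]; ring
      _ ≤ ((d : ℝ) * (n : ℝ) / 3) ^ d := by
          apply pow_le_pow_left₀ (by positivity) h1
      _ = (d : ℝ) ^ d * (n : ℝ) ^ d / 3 ^ d := by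
          rw [div_pow, mul_pow]
      _ ≤ (Nat.factorial d : ℝ) * 3 ^ d * (n : ℝ) ^ d / 3 ^ d := by
          apply div_le_div_of_nonneg_right ?_ (by positivity)
          exact mul_le_mul_of_nonneg_right (aux_pow_le_factorial d) (by positivity)
      _ = (Nat.factorial d : ℝ) * (n : ℝ) ^ d := by
          rw [mul_right_comm]
          field_simp
  have h : ((s.choose d : ℝ)) * ((w.descFactorial d : ℝ)) * 2 ^ d
      ≤ ((n.descFactorial d : ℝ)) := by
    rw [← mul_le_mul_iff_of_pos_right (show (0:ℝ) < (Nat.factorial d : ℝ) * (n : ℝ) ^ d by positivity)]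
    calc ((s.choose d : ℝ)) * ((w.descFactorial d : ℝ)) * 2 ^ d
          * ((Nat.factorial d : ℝ) * (n : ℝ) ^ d)
        = (((s.choose d : ℝ)) * (Nat.factorial d : ℝ))
            * (((w.descFactorial d : ℝ)) * (n : ℝ) ^ d) * 2 ^ d := by ring
      _ ≤ ((s : ℝ) ^ d) * (((n.descFactorial d : ℝ)) * (w : ℝ) ^ d) * 2 ^ d := by
          apply mul_le_mul_of_nonneg_right _ h2pos.le
          exact mul_le_mul hA hB (by positivity) (by positivity)
      _ = ((n.descFactorial d : ℝ)) * ((s : ℝ) ^ d * (w : ℝ) ^ d * 2 ^ d) := by ring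
      _ ≤ ((n.descFactorial d : ℝ)) * ((Nat.factorial d : ℝ) * (n : ℝ) ^ d) := by
          exact mul_le_mul_of_nonneg_left hkey (by positivity)
  have hfact : (n.descFactorial d : ℝ) * ((n - d).factorial : ℝ) = (n.factorial : ℝ) := by
    have : n.descFactorial d * (n - d).factorial = n.factorial := by
      rw [Nat.descFactorial_eq_factorial_mul_choose]
      rw [← Nat.choose_mul_factorial_mul_factorial hdn]
      ring
    exact_mod_cast this
  rw [inv_mul_eq_div, le_div_iff₀ h2pos]
  push_cast
  calc (s.choose d : ℝ) * (((n - d).factorial : ℝ) * (w.descFactorial d : ℝ)) * 2 ^ d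
      = ((s.choose d : ℝ) * (w.descFactorial d : ℝ) * 2 ^ d) * ((n - d).factorial : ℝ) := by
        ring
    _ ≤ ((n.descFactorial d : ℝ)) * ((n - d).factorial : ℝ) := by
        exact mul_le_mul_of_nonneg_right h (by positivity)
    _ = (n.factorial : ℝ) := hfact

/-- Large-deviation bound for random permutations (Lemma 2.6(iii)):
for `d ≥ 6μ` with `μ = |W|·|S|/n`, the number of permutations `σ` of `{1,…,n}`
with `|σ(S) ∩ W| ≥ d` is at most `2^{−d}·n!`. -/
theorem stmt_3 (n : ℕ) (hn : 1 ≤ n) (S W : Finset (Fin n))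
    (μ : ℝ) (hμ : μ = (W.card : ℝ) * (S.card : ℝ) / (n : ℝ))
    (d : ℕ) (hd : 6 * μ ≤ (d : ℝ)) :
    ((Finset.univ.filter (fun σ : Equiv.Perm (Fin n) =>
        d ≤ ((S.image ⇑σ) ∩ W).card)).card : ℝ)
      ≤ (2 : ℝ) ^ (-(d : ℝ)) * (Nat.factorial n : ℝ) := by
  have hs : S.card ≤ n := by simpa using Finset.card_le_univ S
  have hw : W.card ≤ n := by simpa using Finset.card_le_univ W
  calc ((Finset.univ.filter (fun σ : Equiv.Perm (Fin n) =>
        d ≤ ((S.image ⇑σ) ∩ W).card)).card : ℝ)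
      ≤ ((S.card.choose d * (Nat.factorial (n - d) * W.card.descFactorial d) : ℕ) : ℝ) := by
        exact_mod_cast aux_count n d S W
    _ ≤ (2 : ℝ) ^ (-(d : ℝ)) * (Nat.factorial n : ℝ) :=
        aux_final n S.card W.card d hn hs hw (by rw [hμ] at hd; exact hd)
end

section
/- Let y be a binary string (a list over {0,1}) of length n and let d be a natural number with 2d ≤ n. Then the number of binary strings x of length n whose Levenshtein edit distance from y is at most 2d is at most C(n,2d)²·2^{2d}, where C(n,2d) denotes the binomial coefficient n choose 2d. -/
/-- Cost structure for Levenshtein distance (removed from Mathlib; restored with its old meaning). -/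
structure Levenshtein.Cost (α β δ : Type*) where
  delete : α → δ
  insert : β → δ
  substitute : α → β → δ

/-- The default cost: unit deletion and insertion, substitution free iff the symbols agree. -/
def Levenshtein.defaultCost {α : Type*} [DecidableEq α] : Levenshtein.Cost α α ℕ where
  delete _ := 1
  insert _ := 1
  substitute a b := if a = b then 0 else 1

/-- Levenshtein distance, by the recursion old Mathlib proved for its `levenshtein`. -/
def levenshtein {α β δ : Type*} [AddZeroClass δ] [Min δ] (C : Levenshtein.Cost α β δ) :
    List α → List β → δ
  | [], [] => 0
  | [], y :: ys => C.insert y + levenshtein C [] ys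
  | x :: xs, [] => C.delete x + levenshtein C xs []
  | x :: xs, y :: ys => min (C.delete x + levenshtein C xs (y :: ys))
      (min (C.insert y + levenshtein C (x :: xs) ys) (C.substitute x y + levenshtein C xs ys))
termination_by xs ys => xs.length + ys.length

@[simp] theorem levenshtein_nil_nil {α β δ : Type*} [AddZeroClass δ] [Min δ]
    (C : Levenshtein.Cost α β δ) : levenshtein C ([] : List α) ([] : List β) = 0 := by
  rw [levenshtein]

@[simp] theorem levenshtein_nil_cons {α β δ : Type*} [AddZeroClass δ] [Min δ]
    (C : Levenshtein.Cost α β δ) (y : β) (ys : List β) :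
    levenshtein C ([] : List α) (y :: ys) = C.insert y + levenshtein C [] ys := by
  rw [levenshtein]

@[simp] theorem levenshtein_cons_nil {α β δ : Type*} [AddZeroClass δ] [Min δ]
    (C : Levenshtein.Cost α β δ) (x : α) (xs : List α) :
    levenshtein C (x :: xs) ([] : List β) = C.delete x + levenshtein C xs [] := by
  rw [levenshtein]

theorem levenshtein_cons_cons {α β δ : Type*} [AddZeroClass δ] [Min δ]
    (C : Levenshtein.Cost α β δ) (x : α) (xs : List α) (y : β) (ys : List β) :
    levenshtein C (x :: xs) (y :: ys) = min (C.delete x + levenshtein C xs (y :: ys))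
      (min (C.insert y + levenshtein C (x :: xs) ys) (C.substitute x y + levenshtein C xs ys)) := by
  rw [levenshtein]

namespace Stmt11

variable {α : Type*}

/-- select elements of `l` at `true` positions of mask `m` -/
def extr : List Bool → List α → List α
  | true :: m, a :: l => a :: extr m l
  | false :: m, _ :: l => extr m l
  | _, _ => []

/-- select elements of `l` at `false` positions of mask `m` -/
def extrN : List Bool → List α → List α
  | true :: m, _ :: l => extrN m l
  | false :: m, a :: l => a :: extrN m l
  | _, _ => []

/-- merge back -/
def mrg : List Bool → List α → List α → List α
  | true :: m, a :: s, w => a :: mrg m s w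
  | false :: m, s, b :: w => b :: mrg m s w
  | _, _, _ => []

theorem mrg_extr : ∀ (m : List Bool) (l : List α), m.length = l.length →
    mrg m (extr m l) (extrN m l) = l
  | [], [], _ => rfl
  | true :: m, a :: l, h => by
      simp [extr, extrN, mrg, mrg_extr m l (by simpa using h)]
  | false :: m, a :: l, h => by
      simp [extr, extrN, mrg, mrg_extr m l (by simpa using h)]

theorem length_extr : ∀ (m : List Bool) (l : List α), m.length = l.length →
    (extr m l).length = m.count true
  | [], [], _ => rfl
  | true :: m, a :: l, h => by
      simp [extr, length_extr m l (by simpa using h), List.count_cons]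
  | false :: m, a :: l, h => by
      simp [extr, length_extr m l (by simpa using h), List.count_cons]

theorem length_extrN : ∀ (m : List Bool) (l : List α), m.length = l.length →
    (extrN m l).length = m.count false
  | [], [], _ => rfl
  | true :: m, a :: l, h => by
      simp [extrN, length_extrN m l (by simpa using h), List.count_cons]
  | false :: m, a :: l, h => by
      simp [extrN, length_extrN m l (by simpa using h), List.count_cons]

theorem exists_mask {z l : List α} (h : z.Sublist l) :
    ∃ m : List Bool, m.length = l.length ∧ extr m l = z := by
  induction h with
  | slnil => exact ⟨[], rfl, rfl⟩
  | cons a _ ih => obtain ⟨m, hm, he⟩ := ih; exact ⟨false :: m, by simp [hm], by simp [extr, he]⟩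
  | cons_cons a _ ih => obtain ⟨m, hm, he⟩ := ih; exact ⟨true :: m, by simp [hm], by simp [extr, he]⟩

theorem count_tf : ∀ m : List Bool, m.count true + m.count false = m.length
  | [] => rfl
  | a :: m => by have := count_tf m; cases a <;> simp [List.count_cons] <;> omega

theorem csq : ∀ (x y : List Bool), ∃ z : List Bool, z.Sublist x ∧ z.Sublist y ∧
    x.length + y.length ≤ 2 * z.length + 2 * levenshtein Levenshtein.defaultCost x y
  | [], y => ⟨[], List.nil_sublist _, List.nil_sublist _, by
      induction y with
      | nil => simp
      | cons b ys ih => simp [Levenshtein.defaultCost] at ih ⊢; omega⟩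
  | x :: xs, [] => by
      obtain ⟨z, h1, h2, h3⟩ := csq xs []
      have hz : z = [] := List.sublist_nil.mp h2
      subst hz
      exact ⟨[], List.nil_sublist _, List.nil_sublist _, by
        simp only [levenshtein_cons_nil]
        simp [Levenshtein.defaultCost] at h3 ⊢; omega⟩
  | x :: xs, y :: ys => by
      rcases min_cases (Levenshtein.defaultCost.delete x + levenshtein Levenshtein.defaultCost xs (y :: ys))
        (min (Levenshtein.defaultCost.insert y + levenshtein Levenshtein.defaultCost (x :: xs) ys)
          (Levenshtein.defaultCost.substitute x y + levenshtein Levenshtein.defaultCost xs ys)) with hc | hc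
      · obtain ⟨z, h1, h2, h3⟩ := csq xs (y :: ys)
        refine ⟨z, h1.cons x, h2, ?_⟩
        rw [levenshtein_cons_cons, hc.1]
        simp only [Levenshtein.defaultCost] at *
        simp at h3 ⊢; omega
      · rcases min_cases (Levenshtein.defaultCost.insert y + levenshtein Levenshtein.defaultCost (x :: xs) ys)
          (Levenshtein.defaultCost.substitute x y + levenshtein Levenshtein.defaultCost xs ys) with hc2 | hc2
        · obtain ⟨z, h1, h2, h3⟩ := csq (x :: xs) ys
          refine ⟨z, h1, h2.cons y, ?_⟩
          rw [levenshtein_cons_cons, hc.1, hc2.1]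
          simp only [Levenshtein.defaultCost] at *
          simp at h3 ⊢; omega
        · obtain ⟨z, h1, h2, h3⟩ := csq xs ys
          by_cases hxy : x = y
          · subst hxy
            refine ⟨x :: z, h1.cons_cons x, h2.cons_cons x, ?_⟩
            rw [levenshtein_cons_cons, hc.1, hc2.1]
            simp only [Levenshtein.defaultCost] at *
            simp at h3 ⊢; omega
          · refine ⟨z, h1.cons x, h2.cons y, ?_⟩
            rw [levenshtein_cons_cons, hc.1, hc2.1]
            simp only [Levenshtein.defaultCost] at *
            simp [hxy] at h3 ⊢; omega
termination_by x y => x.length + y.length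

theorem sum_map_ite (m : List Bool) :
    (m.map (fun b => if b = true then 1 else 0)).sum = m.count true := by
  induction m with
  | nil => simp
  | cons a l ih => cases a <;> simp [List.count_cons, ih] <;> omega

def maskOf {n : ℕ} (A : Finset (Fin n)) : List Bool := List.ofFn (fun i => decide (i ∈ A))

def setOfMask (n : ℕ) (m : List Bool) : Finset (Fin n) :=
  Finset.univ.filter (fun i : Fin n => m.getD i false = true)

theorem maskOf_setOfMask {n : ℕ} (m : List Bool) (hm : m.length = n) :
    maskOf (setOfMask n m) = m := by
  subst hm
  simp only [maskOf, setOfMask, Finset.mem_filter, Finset.mem_univ, true_and]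
  have : ∀ i : Fin m.length, (decide (m.getD i false = true)) = m.get i := by
    intro i
    rw [List.getD_eq_getElem m false i.isLt]
    simp
  simp only [this]
  exact List.ofFn_get m

theorem card_setOfMask {n : ℕ} (m : List Bool) (hm : m.length = n) :
    (setOfMask n m).card = m.count true := by
  subst hm
  have h1 : ∀ i : Fin m.length, (m.getD i false = true) ↔ (m.get i = true) := by
    intro i; rw [List.getD_eq_getElem m false i.isLt]; simp
  rw [setOfMask, Finset.card_filter]
  simp only [h1]
  rw [Fin.sum_univ_def, ← List.ofFn_eq_map]
  have : List.ofFn (fun i : Fin m.length => if m.get i = true then 1 else 0)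
      = m.map (fun b => if b = true then 1 else 0) := by
    rw [← List.ofFn_getElem_eq_map m]
    rfl
  rw [this]
  exact sum_map_ite m

end Stmt11

open Stmt11 in
/-- Ball-counting bound for edit distance (key step of Lemma 4.1): the number of
binary strings of length `n` within Levenshtein edit distance `2d` of a fixed
string `y` of length `n` is at most `C(n,2d)²·2^{2d}`. -/
theorem stmt_11 (n d : ℕ) (h : 2 * d ≤ n) (y : List Bool) (hy : y.length = n) :
    (Finset.univ.filter (fun x : List.Vector Bool n =>
        levenshtein Levenshtein.defaultCost x.toList y ≤ 2 * d)).card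
      ≤ (n.choose (2 * d)) ^ 2 * 2 ^ (2 * d) := by
  classical
  set k := n - 2 * d with hk
  set S := (Finset.univ.filter (fun x : List.Vector Bool n =>
        levenshtein Levenshtein.defaultCost x.toList y ≤ 2 * d)) with hS
  set T : Finset ((Finset (Fin n)) × (Finset (Fin n)) × (List.Vector Bool (2 * d))) :=
    (Finset.powersetCard k Finset.univ) ×ˢ
      ((Finset.powersetCard k Finset.univ) ×ˢ Finset.univ) with hT
  set decode : (Finset (Fin n)) × (Finset (Fin n)) × (List.Vector Bool (2 * d)) → List Bool :=
    fun p => mrg (maskOf p.1) (extr (maskOf p.2.1) y) p.2.2.toList with hdec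
  have key : ∀ x ∈ S, ∃ p, p ∈ T ∧ decode p = x.toList := by
    intro x hx
    rw [hS, Finset.mem_filter] at hx
    obtain ⟨z, hzx, hzy, hlen⟩ := csq x.toList y
    have hxl : x.toList.length = n := x.toList_length
    have hzlen : k ≤ z.length := by
      have := hx.2
      omega
    have hz'x : (z.take k).Sublist x.toList := (List.take_sublist _ _).trans hzx
    have hz'y : (z.take k).Sublist y := (List.take_sublist _ _).trans hzy
    have hz'len : (z.take k).length = k := by simp [List.length_take]; omega
    obtain ⟨m1, hm1l, hm1e⟩ := exists_mask hz'x
    obtain ⟨m2, hm2l, hm2e⟩ := exists_mask hz'y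
    rw [hxl] at hm1l
    rw [hy] at hm2l
    have hc1 : m1.count true = k := by
      have := length_extr m1 x.toList (by omega)
      rw [hm1e, hz'len] at this; omega
    have hc2 : m2.count true = k := by
      have := length_extr m2 y (by omega)
      rw [hm2e, hz'len] at this; omega
    have hwlen : (extrN m1 x.toList).length = 2 * d := by
      have := length_extrN m1 x.toList (by omega)
      have h2 := count_tf m1
      omega
    refine ⟨(setOfMask n m1, setOfMask n m2, ⟨extrN m1 x.toList, hwlen⟩), ?_, ?_⟩
    · rw [hT]
      simp only [Finset.mem_product, Finset.mem_powersetCard_univ, Finset.mem_univ, and_true]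
      exact ⟨card_setOfMask m1 hm1l ▸ hc1, ⟨card_setOfMask m2 hm2l ▸ hc2, Finset.mem_univ _⟩⟩
    · rw [hdec]
      simp only
      rw [maskOf_setOfMask m1 hm1l, maskOf_setOfMask m2 hm2l, hm2e, ← hm1e]
      exact mrg_extr m1 x.toList (by omega)
  choose F hFT hFd using key
  have hcard : S.card ≤ T.card := by
    apply Finset.card_le_card_of_injOn
      (fun x => if hx : x ∈ S then F x hx else (∅, ∅, List.Vector.replicate (2 * d) false))
    · intro x hx
      simp only [dif_pos (Finset.mem_coe.mp hx)]
      exact hFT x hx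
    · intro x1 h1 x2 h2 he
      rw [Finset.mem_coe] at h1 h2
      simp only [dif_pos h1, dif_pos h2] at he
      have : decode (F x1 h1) = decode (F x2 h2) := by rw [he]
      rw [hFd x1 h1, hFd x2 h2] at this
      exact List.Vector.toList_injective this
  have hTcard : T.card = (n.choose (2 * d)) ^ 2 * 2 ^ (2 * d) := by
    rw [hT, Finset.card_product, Finset.card_product, Finset.card_powersetCard,
      Finset.card_univ, Finset.card_univ, Fintype.card_fin, card_vector, Fintype.card_bool]
    have : n.choose k = n.choose (2 * d) := by
      rw [hk, Nat.choose_symm h]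
    rw [this]
    ring
  omega
end

section
/- Let n ≥ 1 be an integer, let y' ∈ {0,1}^n be a fixed string, let S ⊆ {1,…,n}, let m₀ ≤ n be a natural number, and let adv be any function assigning to each string in {0,1}^n a subset of {1,…,n} of size at most m₀ (the adversary's corrupted positions, chosen as a function of the observed word). Let π be uniformly distributed over all n! permutations of {1,…,n} and let w be uniformly distributed over {0,1}^n, with π and w independent, and define z ∈ {0,1}^n by z_j = y'_{π^{-1}(j)} ⊕ w_j for each j. Then, with μ₀ = m₀·|S|/n, Pr[ |π(S) ∩ adv(z)| ≥ 1.1·μ₀ ] ≤ exp(−0.01·μ₀/3). -/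
open scoped Classical
open Finset


lemma exp_aux {y : ℝ} (h0 : 0 ≤ y) (h1 : y ≤ 0.1) : Real.exp (y/1.1) ≤ 1 + y := by
  have hy : (0:ℝ) < 1 + y := by linarith
  have h2 : 1 - y/(1+y) ≤ Real.exp (-(y/(1+y))) := by
    have := Real.add_one_le_exp (-(y/(1+y))); linarith
  have h3 : 1 - y/(1+y) = 1/(1+y) := by field_simp; ring
  have h4 : Real.exp (y/(1+y)) * (1/(1+y)) ≤ 1 := by
    calc Real.exp (y/(1+y)) * (1/(1+y)) ≤ Real.exp (y/(1+y)) * Real.exp (-(y/(1+y))) := by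
          rw [h3] at h2
          exact mul_le_mul_of_nonneg_left h2 (Real.exp_pos _).le
      _ = 1 := by rw [← Real.exp_add]; simp
  have h5 : Real.exp (y/(1+y)) ≤ 1 + y := by
    rw [mul_one_div] at h4
    exact (div_le_one hy).1 h4
  refine le_trans (Real.exp_le_exp.2 ?_) h5
  apply div_le_div_of_nonneg_left h0 hy (by linarith)

lemma df_cast (a k : ℕ) (hka : k ≤ a) :
    (a.descFactorial k : ℝ) = ∏ i ∈ range k, ((a:ℝ) - i) := by
  rw [Nat.descFactorial_eq_prod_range, Nat.cast_prod]
  apply Finset.prod_congr rfl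
  intro i hi
  rw [Nat.cast_sub (le_trans (Nat.le_of_lt (mem_range.1 hi)) hka)]



lemma df_mul_pow_le {s n : ℕ} (h : s ≤ n) (k : ℕ) :
    s.descFactorial k * n^k ≤ s^k * n.descFactorial k := by
  have e1 : n^k = ∏ _i ∈ range k, n := by rw [Finset.prod_const, card_range]
  have e2 : s^k = ∏ _i ∈ range k, s := by rw [Finset.prod_const, card_range]
  rw [Nat.descFactorial_eq_prod_range, Nat.descFactorial_eq_prod_range, e1, e2,
    ← Finset.prod_mul_distrib, ← Finset.prod_mul_distrib]
  apply Finset.prod_le_prod'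
  intro i _
  have h1 : i * s ≤ i * n := Nat.mul_le_mul_left i h
  calc (s - i) * n = s*n - i*n := by rw [Nat.sub_mul]
    _ ≤ s*n - s*i := Nat.sub_le_sub_left (by rw [Nat.mul_comm s i]; exact h1) _
    _ = s * (n - i) := by rw [Nat.mul_sub]



lemma perm_image_eq_card_le {α : Type*} [Fintype α] [DecidableEq α] (A B : Finset α)
    (hAB : A.card = B.card) :
    (Finset.univ.filter fun σ : Equiv.Perm α => A.image σ = B).card ≤
      Nat.factorial A.card * Nat.factorial (Fintype.card α - A.card) := by
  classical
  have hmem : ∀ (σ : Equiv.Perm α), A.image σ = B → ∀ a : α, a ∈ A → σ a ∈ B := by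
    intro σ h a ha; rw [← h]; exact mem_image_of_mem _ ha
  have hmem' : ∀ (σ : Equiv.Perm α), A.image σ = B → ∀ a : α, a ∉ A → σ a ∉ B := by
    intro σ h a ha hb
    rw [← h, mem_image] at hb
    obtain ⟨a', ha', he⟩ := hb
    exact ha (by rwa [σ.injective he] at ha')
  let Φ : {σ : Equiv.Perm α // A.image σ = B} → (↥A ↪ ↥B) × (↥(Aᶜ) ↪ ↥(Bᶜ)) :=
    fun σ => (⟨fun a => ⟨σ.1 a.1, hmem σ.1 σ.2 a.1 a.2⟩,
        fun x y h => Subtype.ext (σ.1.injective (congrArg Subtype.val h))⟩,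
      ⟨fun a => ⟨σ.1 a.1, by
          have := a.2
          simp only [Finset.mem_compl] at this ⊢
          exact hmem' σ.1 σ.2 a.1 this⟩,
        fun x y h => Subtype.ext (σ.1.injective (congrArg Subtype.val h))⟩)
  have hΦ : Function.Injective Φ := by
    intro σ τ h
    have h1 := congrArg Prod.fst h
    have h2 := congrArg Prod.snd h
    apply Subtype.ext
    apply Equiv.ext
    intro x
    by_cases hx : x ∈ A
    · exact congrArg Subtype.val (DFunLike.congr_fun h1 ⟨x, hx⟩)
    · exact congrArg Subtype.val (DFunLike.congr_fun h2 ⟨x, Finset.mem_compl.2 hx⟩)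
  have hcard := Fintype.card_le_of_injective Φ hΦ
  rw [Fintype.card_subtype] at hcard
  rw [Fintype.card_prod, Fintype.card_embedding_eq, Fintype.card_embedding_eq] at hcard
  simp only [Fintype.card_coe, Finset.card_compl] at hcard
  rw [← hAB] at hcard
  rwa [Nat.descFactorial_self, Nat.descFactorial_self] at hcard


lemma perm_image_subset_card_le {α : Type*} [Fintype α] [DecidableEq α] (A S : Finset α) :
    (Finset.univ.filter fun σ : Equiv.Perm α => A.image σ ⊆ S).card ≤
      S.card.descFactorial A.card * Nat.factorial (Fintype.card α - A.card) := by
  classical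
  have hsub : (Finset.univ.filter fun σ : Equiv.Perm α => A.image σ ⊆ S) ⊆
      (S.powersetCard A.card).biUnion
        (fun B => Finset.univ.filter fun σ : Equiv.Perm α => A.image σ = B) := by
    intro σ hσ
    rw [mem_filter] at hσ
    rw [mem_biUnion]
    exact ⟨A.image σ, mem_powersetCard.2 ⟨hσ.2, A.card_image_of_injective σ.injective⟩,
      mem_filter.2 ⟨mem_univ _, rfl⟩⟩
  calc (Finset.univ.filter fun σ : Equiv.Perm α => A.image σ ⊆ S).card
      ≤ ((S.powersetCard A.card).biUnion
        (fun B => Finset.univ.filter fun σ : Equiv.Perm α => A.image σ = B)).card :=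
        Finset.card_le_card hsub
    _ ≤ ∑ B ∈ S.powersetCard A.card,
        (Finset.univ.filter fun σ : Equiv.Perm α => A.image σ = B).card :=
        Finset.card_biUnion_le
    _ ≤ ∑ B ∈ S.powersetCard A.card,
        Nat.factorial A.card * Nat.factorial (Fintype.card α - A.card) := by
        apply Finset.sum_le_sum
        intro B hB
        exact perm_image_eq_card_le A B (mem_powersetCard.1 hB).2.symm
    _ = S.card.choose A.card * (Nat.factorial A.card * Nat.factorial (Fintype.card α - A.card)) := by
        rw [Finset.sum_const, card_powersetCard, smul_eq_mul]
    _ = S.card.descFactorial A.card * Nat.factorial (Fintype.card α - A.card) := by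
        rw [Nat.descFactorial_eq_factorial_mul_choose]
        ring


lemma subset_image_count {α : Type*} [Fintype α] [DecidableEq α] (A S : Finset α) :
    (Finset.univ.filter fun π : Equiv.Perm α => A ⊆ S.image π).card =
      (Finset.univ.filter fun σ : Equiv.Perm α => A.image σ ⊆ S).card := by
  classical
  apply Finset.card_bij' (fun π _ => π.symm) (fun σ _ => σ.symm)
  · intro π _; simp
  · intro σ _; simp
  · intro π hπ
    rw [mem_filter] at hπ ⊢
    refine ⟨mem_univ _, ?_⟩
    intro x hx
    rw [mem_image] at hx
    obtain ⟨a, ha, rfl⟩ := hx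
    have := hπ.2 ha
    rw [mem_image] at this
    obtain ⟨b, hb, rfl⟩ := this
    rwa [Equiv.symm_apply_apply]
  · intro σ hσ
    rw [mem_filter] at hσ ⊢
    refine ⟨mem_univ _, ?_⟩
    intro a ha
    rw [mem_image]
    exact ⟨σ a, hσ.2 (mem_image_of_mem _ ha), Equiv.symm_apply_apply _ _⟩


lemma event_count {α : Type*} [Fintype α] [DecidableEq α] (S T : Finset α) (a k : ℕ) :
    (Finset.univ.filter fun π : Equiv.Perm α => a ≤ ((S.image π ∩ T)).card).card * a.choose k ≤
      T.card.choose k * (S.card.descFactorial k * Nat.factorial (Fintype.card α - k)) := by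
  classical
  have hps : ∀ π : Equiv.Perm α, ((S.image π ∩ T)).powersetCard k =
      (T.powersetCard k).filter (fun A => A ⊆ S.image π) := by
    intro π
    ext A
    simp only [mem_powersetCard, mem_filter, subset_inter_iff]
    tauto
  calc (Finset.univ.filter fun π : Equiv.Perm α => a ≤ ((S.image π ∩ T)).card).card * a.choose k
      = ∑ π ∈ Finset.univ.filter
          (fun π : Equiv.Perm α => a ≤ ((S.image π ∩ T)).card), a.choose k := by
        rw [Finset.sum_const, smul_eq_mul]
    _ ≤ ∑ π ∈ Finset.univ.filter
          (fun π : Equiv.Perm α => a ≤ ((S.image π ∩ T)).card),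
          ((S.image π ∩ T)).card.choose k := by
        apply Finset.sum_le_sum
        intro π hπ
        exact Nat.choose_le_choose k (mem_filter.1 hπ).2
    _ ≤ ∑ π : Equiv.Perm α, ((S.image π ∩ T)).card.choose k := by
        apply Finset.sum_le_sum_of_subset
        exact Finset.filter_subset _ _
    _ = ∑ π : Equiv.Perm α, ((T.powersetCard k).filter (fun A => A ⊆ S.image π)).card := by
        apply Finset.sum_congr rfl
        intro π _
        rw [← card_powersetCard, hps π]
    _ = ∑ π : Equiv.Perm α, ∑ A ∈ T.powersetCard k, if A ⊆ S.image π then 1 else 0 := by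
        apply Finset.sum_congr rfl
        intro π _
        rw [Finset.card_filter]
    _ = ∑ A ∈ T.powersetCard k, ∑ π : Equiv.Perm α, if A ⊆ S.image π then 1 else 0 :=
        Finset.sum_comm
    _ = ∑ A ∈ T.powersetCard k,
          (Finset.univ.filter fun π : Equiv.Perm α => A ⊆ S.image π).card := by
        apply Finset.sum_congr rfl
        intro A _
        rw [Finset.card_filter]
    _ ≤ ∑ A ∈ T.powersetCard k,
          S.card.descFactorial k * Nat.factorial (Fintype.card α - k) := by
        apply Finset.sum_le_sum
        intro A hA
        rw [subset_image_count]
        have := perm_image_subset_card_le A S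
        rwa [(mem_powersetCard.1 hA).2] at this
    _ = T.card.choose k * (S.card.descFactorial k * Nat.factorial (Fintype.card α - k)) := by
        rw [Finset.sum_const, card_powersetCard, smul_eq_mul]


lemma numeric (μ : ℝ) (hμ : 0 < μ) (a : ℕ) (ha : 1.1 * μ ≤ (a:ℝ)) :
    ∃ k : ℕ, 1 ≤ k ∧ (k:ℝ) ≤ max 1 (μ/10) ∧ k ≤ a ∧
      Real.exp (μ/300) * μ^k ≤ (a.descFactorial k : ℝ) := by
  have ha0 : (0:ℝ) < a := lt_of_lt_of_le (by linarith) ha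
  have ha1 : 1 ≤ a := Nat.cast_pos.mp ha0
  rcases le_or_gt μ 20 with h20 | h20
  · -- k = 1
    refine ⟨1, le_refl _, le_max_of_le_left (by norm_num), ha1, ?_⟩
    rw [df_cast a 1 ha1]
    simp only [Finset.prod_range_one, Nat.cast_zero, sub_zero, pow_one]
    have h2 : 1 - μ/300 ≤ Real.exp (-(μ/300)) := by
      have := Real.add_one_le_exp (-(μ/300)); linarith
    have h3 : (14/15:ℝ) ≤ Real.exp (-(μ/300)) := by linarith
    have h4 : Real.exp (μ/300) ≤ 15/14 := by
      have h5 : Real.exp (μ/300) * Real.exp (-(μ/300)) = 1 := by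
        rw [← Real.exp_add]; simp
      nlinarith [Real.exp_pos (μ/300)]
    nlinarith
  · -- k = floor (μ/10)
    set k := ⌊μ/10⌋₊ with hk
    have hk2 : 2 ≤ k := Nat.le_floor (by push_cast; linarith)
    have hkμ : (k:ℝ) ≤ μ/10 := Nat.floor_le (by positivity)
    have hkμ' : μ/10 < (k:ℝ) + 1 := Nat.lt_floor_add_one _
    have hka : k ≤ a := by
      have : (k:ℝ) ≤ (a:ℝ) := by linarith
      exact_mod_cast this
    refine ⟨k, by omega, le_max_of_le_right hkμ, hka, ?_⟩
    rw [df_cast a k hka]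
    -- per-index facts
    have hik : ∀ i ∈ range k, (i:ℝ) ≤ (k:ℝ) - 1 := by
      intro i hi
      have h' := mem_range.1 hi
      have : (i:ℝ) + 1 ≤ (k:ℝ) := by exact_mod_cast h'
      linarith
    have hy0 : ∀ i ∈ range k, 0 ≤ 0.1 - (i:ℝ)/μ := by
      intro i hi
      have h1 : (i:ℝ)/μ ≤ ((k:ℝ)-1)/μ := by gcongr; exact hik i hi
      have h2 : ((k:ℝ)-1)/μ ≤ (μ/10 - 1)/μ := by gcongr <;> linarith
      have h3 : (μ/10 - 1)/μ ≤ 0.1 := by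
        rw [div_le_iff₀ hμ]; nlinarith
      linarith
    have hy1 : ∀ i ∈ range k, (0.1 - (i:ℝ)/μ) ≤ 0.1 := by
      intro i hi
      have : 0 ≤ (i:ℝ)/μ := by positivity
      linarith
    -- step 1: the sum bound
    have hsumid : (∑ i ∈ range k, (i:ℝ)) = (k:ℝ) * ((k:ℝ) - 1) / 2 := by
      have h := Finset.sum_range_id_mul_two k
      have h' : ((∑ i ∈ range k, i : ℕ) : ℝ) * 2 = (k:ℝ) * ((k:ℝ) - 1) := by
        rw [← Nat.cast_ofNat, ← Nat.cast_mul, h]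
        have : ((k - 1 : ℕ) : ℝ) = (k:ℝ) - 1 := by
          rw [Nat.cast_sub (by omega)]; norm_num
        push_cast [this]
        ring
      push_cast at h' ⊢
      linarith
    have hsum : μ/300 ≤ ∑ i ∈ range k, (0.1 - (i:ℝ)/μ)/1.1 := by
      have : (∑ i ∈ range k, (0.1 - (i:ℝ)/μ)/1.1)
          = (0.1 * k - ((k:ℝ) * ((k:ℝ)-1)/2)/μ)/1.1 := by
        rw [← hsumid]
        rw [Finset.sum_div]
        rw [← Finset.sum_div, Finset.sum_sub_distrib, Finset.sum_const, card_range]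
        push_cast
        ring
      rw [this]
      rw [le_div_iff₀ (by norm_num : (0:ℝ) < 1.1)]
      have hprod : 0 ≤ ((k:ℝ) - (μ/10 - 1)) * (μ/10 - (k:ℝ)) := by nlinarith
      have hKK : (k:ℝ)*((k:ℝ)-1)/2/μ = (k:ℝ)*((k:ℝ)-1)/(2*μ) := by ring
      rw [hKK]
      have expand : 0.1 * (k:ℝ) - (k:ℝ)*((k:ℝ)-1)/(2*μ)
          = (0.1*(k:ℝ)*(2*μ) - (k:ℝ)*((k:ℝ)-1))/(2*μ) := by
        field_simp
      rw [expand, le_div_iff₀ (by positivity : (0:ℝ) < 2*μ)]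
      nlinarith [hprod, hkμ, hkμ', h20, hμ]
    calc Real.exp (μ/300) * μ^k
        ≤ Real.exp (∑ i ∈ range k, (0.1 - (i:ℝ)/μ)/1.1) * μ^k :=
          mul_le_mul_of_nonneg_right (Real.exp_le_exp.2 hsum) (by positivity)
      _ = (∏ i ∈ range k, Real.exp ((0.1 - (i:ℝ)/μ)/1.1)) * μ^k := by rw [Real.exp_sum]
      _ ≤ (∏ i ∈ range k, (1 + (0.1 - (i:ℝ)/μ))) * μ^k := by
          apply mul_le_mul_of_nonneg_right _ (by positivity)
          apply Finset.prod_le_prod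
          · intro i hi; positivity
          · intro i hi; exact exp_aux (hy0 i hi) (hy1 i hi)
      _ = ∏ i ∈ range k, (μ * (1 + (0.1 - (i:ℝ)/μ))) := by
          rw [Finset.prod_mul_distrib, Finset.prod_const, card_range, mul_comm]
      _ ≤ ∏ i ∈ range k, ((a:ℝ) - i) := by
          apply Finset.prod_le_prod
          · intro i hi
            exact mul_nonneg hμ.le (by linarith [hy0 i hi])
          · intro i hi
            have he : μ * (1 + (0.1 - (i:ℝ)/μ)) = 1.1*μ - i := by
              field_simp; ring
            rw [he]; linarith


lemma key_bound (n : ℕ) (hn : 1 ≤ n) (S T : Finset (Fin n)) (m₀ : ℕ) (hm₀ : m₀ ≤ n)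
    (hT : T.card ≤ m₀) (μ : ℝ) (hμ : μ = (m₀ : ℝ) * (S.card : ℝ) / (n : ℝ)) :
    ((Finset.univ.filter fun π : Equiv.Perm (Fin n) =>
        1.1 * μ ≤ ((S.image π ∩ T).card : ℝ)).card : ℝ)
      ≤ (Nat.factorial n : ℝ) * Real.exp (-(0.01 * μ) / 3) := by
  have hn0 : (0:ℝ) < n := by exact_mod_cast hn
  have hs : S.card ≤ n := by
    simpa using Finset.card_le_univ S
  have hexparg : -(0.01 * μ) / 3 = -(μ/300) := by ring
  rcases eq_or_lt_of_le (show (0:ℝ) ≤ μ by rw [hμ]; positivity) with hμ0 | hμ0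
  · -- μ = 0
    have h1 : ((Finset.univ.filter fun π : Equiv.Perm (Fin n) =>
        1.1 * μ ≤ ((S.image π ∩ T).card : ℝ)).card : ℝ) ≤ (Nat.factorial n : ℝ) := by
      have h0 := Finset.card_filter_le (Finset.univ : Finset (Equiv.Perm (Fin n)))
        (fun π => 1.1 * μ ≤ ((S.image π ∩ T).card : ℝ))
      have h2 : (Finset.univ : Finset (Equiv.Perm (Fin n))).card = Nat.factorial n := by
        rw [Finset.card_univ]
        rw [Fintype.card_perm, Fintype.card_fin]
      rw [h2] at h0
      exact_mod_cast h0
    rw [hexparg, ← hμ0]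
    rw [← hμ0] at h1
    have he : Real.exp (-((0:ℝ)/300)) = 1 := by norm_num
    rw [he, mul_one]
    exact h1
  · -- μ > 0
    set a := ⌈1.1 * μ⌉₊ with hadef
    obtain ⟨k, hk1, hkmax, hka, hnum⟩ := numeric μ hμ0 a (Nat.le_ceil _)
    have hμn : μ ≤ n := by
      rw [hμ, div_le_iff₀ hn0]
      have h1 : (m₀:ℝ) ≤ n := by exact_mod_cast hm₀
      have h2 : (S.card:ℝ) ≤ n := by exact_mod_cast hs
      have h3 : (0:ℝ) ≤ S.card := by positivity
      nlinarith
    have hkn : k ≤ n := by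
      have : (k:ℝ) ≤ (n:ℝ) := le_trans hkmax (max_le (by exact_mod_cast hn)
        (by linarith [hμ0]))
      exact_mod_cast this
    -- rewrite the filter
    have hfeq : (Finset.univ.filter fun π : Equiv.Perm (Fin n) =>
          1.1 * μ ≤ ((S.image π ∩ T).card : ℝ)) =
        (Finset.univ.filter fun π : Equiv.Perm (Fin n) => a ≤ (S.image π ∩ T).card) := by
      apply Finset.filter_congr
      intro π _
      rw [hadef]
      exact ⟨fun h => Nat.ceil_le.2 h, fun h => le_trans (Nat.le_ceil _) (by exact_mod_cast h)⟩
    rw [hfeq]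
    set N := (Finset.univ.filter fun π : Equiv.Perm (Fin n) =>
      a ≤ (S.image π ∩ T).card).card with hN
    have hmain := event_count S T a k
    rw [Fintype.card_fin] at hmain
    -- ℕ chain
    have h1 : N * a.descFactorial k ≤
        T.card.descFactorial k * (S.card.descFactorial k * Nat.factorial (n - k)) := by
      have e1 : a.descFactorial k = Nat.factorial k * a.choose k :=
        Nat.descFactorial_eq_factorial_mul_choose a k
      have e2 : T.card.descFactorial k = Nat.factorial k * T.card.choose k :=
        Nat.descFactorial_eq_factorial_mul_choose _ k
      calc N * a.descFactorial k = N * a.choose k * Nat.factorial k := by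
            rw [e1]; ring
        _ ≤ T.card.choose k * (S.card.descFactorial k * Nat.factorial (n - k))
              * Nat.factorial k := Nat.mul_le_mul_right _ hmain
        _ = T.card.descFactorial k * (S.card.descFactorial k * Nat.factorial (n - k)) := by
            rw [e2]; ring
    have h2 : N * a.descFactorial k * n^k ≤ m₀^k * S.card^k * Nat.factorial n := by
      calc N * a.descFactorial k * n^k
          ≤ (T.card.descFactorial k * (S.card.descFactorial k * Nat.factorial (n - k))) * n^k :=
            Nat.mul_le_mul_right _ h1
        _ = T.card.descFactorial k * ((S.card.descFactorial k * n^k) * Nat.factorial (n - k)) := by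
            ring
        _ ≤ m₀^k * ((S.card^k * n.descFactorial k) * Nat.factorial (n - k)) := by
            apply Nat.mul_le_mul
            · exact le_trans (Nat.descFactorial_le_pow _ _) (Nat.pow_le_pow_left hT k)
            · exact Nat.mul_le_mul_right _ (df_mul_pow_le hs k)
        _ = m₀^k * S.card^k * (Nat.factorial (n - k) * n.descFactorial k) := by ring
        _ = m₀^k * S.card^k * Nat.factorial n := by
            rw [Nat.factorial_mul_descFactorial hkn]
    have hR : (N:ℝ) * (a.descFactorial k : ℝ) * (n:ℝ)^k
        ≤ (m₀:ℝ)^k * (S.card:ℝ)^k * (Nat.factorial n : ℝ) := by exact_mod_cast h2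
    have hms : (m₀:ℝ)^k * (S.card:ℝ)^k = μ^k * (n:ℝ)^k := by
      rw [hμ, div_pow, ← mul_pow, div_mul_cancel₀]
      positivity
    have hR2 : (N:ℝ) * (a.descFactorial k : ℝ) ≤ μ^k * (Nat.factorial n : ℝ) := by
      rw [hms] at hR
      have hpk : (0:ℝ) < (n:ℝ)^k := by positivity
      rw [← mul_le_mul_iff_of_pos_right hpk]
      have hrg : μ^k * (n:ℝ)^k * (Nat.factorial n : ℝ)
          = μ^k * (Nat.factorial n : ℝ) * (n:ℝ)^k := by ring
      linarith [hR, hrg.le, hrg.ge]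
    have hdfpos : (0:ℝ) < (a.descFactorial k : ℝ) :=
      lt_of_lt_of_le (by positivity) hnum
    have hμk : μ^k ≤ (a.descFactorial k : ℝ) * Real.exp (-(μ/300)) := by
      have := mul_le_mul_of_nonneg_left hnum (Real.exp_pos (-(μ/300))).le
      rw [← mul_assoc, ← Real.exp_add] at this
      simp only [neg_add_cancel, Real.exp_zero, one_mul] at this
      linarith
    rw [hexparg]
    have hfinal : (N:ℝ) * (a.descFactorial k : ℝ)
        ≤ (a.descFactorial k : ℝ) * (Real.exp (-(μ/300)) * (Nat.factorial n : ℝ)) := by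
      calc (N:ℝ) * (a.descFactorial k : ℝ) ≤ μ^k * (Nat.factorial n : ℝ) := hR2
        _ ≤ (a.descFactorial k : ℝ) * Real.exp (-(μ/300)) * (Nat.factorial n : ℝ) := by
            apply mul_le_mul_of_nonneg_right hμk (by positivity)
        _ = (a.descFactorial k : ℝ) * (Real.exp (-(μ/300)) * (Nat.factorial n : ℝ)) := by ring
    have := le_of_mul_le_mul_left (by
      calc (a.descFactorial k : ℝ) * (N:ℝ)
          = (N:ℝ) * (a.descFactorial k : ℝ) := by ring
        _ ≤ (a.descFactorial k : ℝ) * (Real.exp (-(μ/300)) * (Nat.factorial n : ℝ)) := hfinal)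
      hdfpos
    linarith

/-- Probabilistic core of the shared-randomness LDC construction (Theorem 3.1):
the transmitted word `z` (the `π`-permuted codeword `y'` masked by a uniform pad
`w`) is independent of `π`, so for any adversary choosing at most `m₀` corrupted
positions as a function of `z`, the probability (over uniform `(π, w)`) that at
least `1.1·μ₀` positions of `π(S)` are corrupted, where `μ₀ = m₀·|S|/n`, is at
most `exp(−0.01·μ₀/3)`. Probability is formalized by counting over the uniform
sample space of pairs `(π, w)`. -/
theorem stmt_15 (n : ℕ) (hn : 1 ≤ n) (y' : Fin n → Bool) (S : Finset (Fin n))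
    (m₀ : ℕ) (hm₀ : m₀ ≤ n)
    (adv : (Fin n → Bool) → Finset (Fin n)) (hadv : ∀ v, (adv v).card ≤ m₀)
    (μ₀ : ℝ) (hμ₀ : μ₀ = (m₀ : ℝ) * (S.card : ℝ) / (n : ℝ)) :
    ((Finset.univ.filter (fun pw : Equiv.Perm (Fin n) × (Fin n → Bool) =>
        1.1 * μ₀ ≤
          (((S.image ⇑pw.1) ∩
            adv (fun j => xor (y' (pw.1.symm j)) (pw.2 j))).card : ℝ))).card : ℝ)
      / ((Nat.factorial n : ℝ) * 2 ^ n)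
      ≤ Real.exp (-(0.01 * μ₀) / 3) := by
  classical
  have hA : (Finset.univ.filter (fun pw : Equiv.Perm (Fin n) × (Fin n → Bool) =>
        1.1 * μ₀ ≤
          (((S.image ⇑pw.1) ∩
            adv (fun j => xor (y' (pw.1.symm j)) (pw.2 j))).card : ℝ))).card
      = ∑ v : Fin n → Bool, (Finset.univ.filter fun π : Equiv.Perm (Fin n) =>
          1.1 * μ₀ ≤ ((S.image ⇑π ∩ adv v).card : ℝ)).card := by
    rw [Finset.card_filter, Fintype.sum_prod_type]
    have hπ : ∀ π : Equiv.Perm (Fin n),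
        (∑ w : Fin n → Bool,
          if 1.1*μ₀ ≤ (((S.image ⇑π) ∩
            adv (fun j => xor (y' (π.symm j)) (w j))).card:ℝ) then 1 else 0)
        = ∑ v : Fin n → Bool,
          if 1.1*μ₀ ≤ ((S.image ⇑π ∩ adv v).card:ℝ) then (1:ℕ) else 0 := by
      intro π
      have hinv : Function.Involutive
          (fun w : Fin n → Bool => fun j => xor (y' (π.symm j)) (w j)) := by
        intro w
        funext j
        simp
      exact Equiv.sum_comp hinv.toPerm
        (fun v => if 1.1*μ₀ ≤ ((S.image ⇑π ∩ adv v).card:ℝ) then (1:ℕ) else 0)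
    rw [Finset.sum_congr rfl (fun π _ => hπ π), Finset.sum_comm]
    apply Finset.sum_congr rfl
    intro v _
    rw [Finset.card_filter]
  have hpos : (0:ℝ) < (Nat.factorial n : ℝ) * 2 ^ n := by positivity
  rw [div_le_iff₀ hpos, hA]
  push_cast
  calc (∑ v : Fin n → Bool, ((Finset.univ.filter fun π : Equiv.Perm (Fin n) =>
          1.1 * μ₀ ≤ ((S.image ⇑π ∩ adv v).card : ℝ)).card : ℝ))
      ≤ ∑ _v : Fin n → Bool, (Nat.factorial n : ℝ) * Real.exp (-(0.01 * μ₀) / 3) := by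
        apply Finset.sum_le_sum
        intro v _
        exact key_bound n hn S (adv v) m₀ hm₀ (hadv v) μ₀ hμ₀
    _ = Real.exp (-(0.01 * μ₀) / 3) * ((Nat.factorial n : ℝ) * 2 ^ n) := by
        rw [Finset.sum_const, Finset.card_univ]
        have : Fintype.card (Fin n → Bool) = 2 ^ n := by
          rw [Fintype.card_fun, Fintype.card_bool, Fintype.card_fin]
        rw [this]
        push_cast
        ring
end
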